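/- arXiv:2004.02129 — 8 statements merged into one kernel-verified Lean document; each statement's English description precedes it below -/
import Mathlib

section
/- Let f : [q]^n → [q]^n be an automata network and B, B' two block-sequential update schedules (ordered partitions of [n]). If the induced arc labelings lab_B and lab_{B'} on the interaction digraph of f are equal, then the dynamics f^{(B)} and f^{(B')} are equal as functions on [q]^n. -/
namespace UD

variable {V : Type*}

/-- Source of arc `a` in the multidigraph where `⊖`-arcs (label `false`) are reversed. -/
def src (lab : V × V → Bool) (a : V × V) : V := if lab a then a.1 else a.2

/-- Destination of arc `a` in the multidigraph where `⊖`-arcs are reversed. -/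
def dst (lab : V × V → Bool) (a : V × V) : V := if lab a then a.2 else a.1

/-- `l` is a (nonempty) walk from `x` to `y` in the multidigraph obtained from the
arcs `A` by reversing the orientation of the arcs labeled `⊖` (`false`). -/
def IsRevWalk (A : Finset (V × V)) (lab : V × V → Bool) (l : List (V × V)) (x y : V) : Prop :=
  l ≠ [] ∧ (∀ a ∈ l, a ∈ A) ∧ l.Chain' (fun a b => dst lab a = src lab b) ∧
    l.head?.map (src lab) = some x ∧ l.getLast?.map (dst lab) = some y

/-- `l` uses at least one `⊖`-labeled arc. -/
def Negative (lab : V × V → Bool) (l : List (V × V)) : Prop := ∃ a ∈ l, lab a = false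

/-- A labeling is valid iff no closed walk of the reversed multidigraph uses a `⊖` arc. -/
def Valid (A : Finset (V × V)) (lab : V × V → Bool) : Prop :=
  ∀ l : List (V × V), (∃ x, IsRevWalk A lab l x x) → ¬ Negative lab l

/-- Plain directed walk in the digraph with arc set `A`. -/
def IsWalk (A : Finset (V × V)) (l : List (V × V)) (x y : V) : Prop :=
  l ≠ [] ∧ (∀ a ∈ l, a ∈ A) ∧ l.Chain' (fun a b => a.2 = b.1) ∧
    l.head?.map Prod.fst = some x ∧ l.getLast?.map Prod.snd = some y

def Acyclic (A : Finset (V × V)) : Prop := ∀ l x, ¬ IsWalk A l x x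

def IsFAS [DecidableEq V] (A F : Finset (V × V)) : Prop := F ⊆ A ∧ Acyclic (A \ F)

def IsMinFAS [DecidableEq V] (A F : Finset (V × V)) : Prop :=
  IsFAS A F ∧ ∀ F' : Finset (V × V), F' ⊂ F → ¬ IsFAS A F'

/-- Extend a labeling of the arcs of `A` to all of `V × V` (by `⊕` outside `A`). -/
def ext [DecidableEq V] (A : Finset (V × V)) (lab : A → Bool) : V × V → Bool :=
  fun a => if h : a ∈ A then lab ⟨a, h⟩ else true

def ValidOn [DecidableEq V] (A : Finset (V × V)) (lab : A → Bool) : Prop := Valid A (ext A lab)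

/-- Number of valid labelings (update digraphs) of the digraph with arc set `A`. -/
noncomputable def numUD [DecidableEq V] (A : Finset (V × V)) : ℕ := Nat.card {lab : A → Bool // ValidOn A lab}

inductive PClass
  | pos | neg | none
  deriving DecidableEq

/-- Connectivity class of the ordered pair `(x, y)` in the reversed multidigraph. -/
def HasClass (A : Finset (V × V)) (lab : V × V → Bool) (x y : V) : PClass → Prop
  | .pos => (∃ l, IsRevWalk A lab l x y) ∧ ∀ l, IsRevWalk A lab l x y → ¬ Negative lab l
  | .neg => ∃ l, IsRevWalk A lab l x y ∧ Negative lab l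
  | .none => ¬ ∃ l, IsRevWalk A lab l x y

/-- Number of valid labelings in the class `(s, t)` of the oss-graph `(A, α, β)`. -/
noncomputable def classCount [DecidableEq V] (A : Finset (V × V)) (α β : V) (s t : PClass) : ℕ :=
  Nat.card {lab : A → Bool //
    ValidOn A lab ∧ HasClass A (ext A lab) α β s ∧ HasClass A (ext A lab) β α t}

/-- Index of the part of the ordered partition `B` containing `v`. -/
def partIdx [DecidableEq V] (B : List (Finset V)) (v : V) : ℕ :=
  B.findIdx (fun P => decide (v ∈ P))

/-- `B` is an ordered partition of `V` (a block-sequential update schedule). -/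
def IsOrdPartition [DecidableEq V] (B : List (Finset V)) : Prop :=
  (∀ P ∈ B, P.Nonempty) ∧ B.Pairwise Disjoint ∧ ∀ v : V, ∃ P ∈ B, v ∈ P

/-- The labeling induced by a schedule: `⊕` (true) iff `i`'s part is not strictly before `j`'s. -/
def labSched [DecidableEq V] (B : List (Finset V)) : V × V → Bool :=
  fun a => decide (partIdx B a.2 ≤ partIdx B a.1)

/-- One step of a block-sequential dynamics: update the components in `P` in parallel. -/
def updStep {n q : ℕ} (f : (Fin n → Fin q) → (Fin n → Fin q)) (P : Finset (Fin n))
    (x : Fin n → Fin q) : Fin n → Fin q :=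
  fun j => if j ∈ P then f x j else x j

/-- The dynamics `f^(B) = f^(B_t) ∘ ... ∘ f^(B_1)` of `f` under the schedule `B`. -/
def applySched {n q : ℕ} (f : (Fin n → Fin q) → (Fin n → Fin q))
    (B : List (Finset (Fin n))) : (Fin n → Fin q) → (Fin n → Fin q) :=
  B.foldl (fun g P => updStep f P ∘ g) id

/-- Arc `(i, j)` of the interaction digraph: `f_j` effectively depends on component `i`. -/
def Arc {n q : ℕ} (f : (Fin n → Fin q) → (Fin n → Fin q)) (i j : Fin n) : Prop :=
  ∃ x y : Fin n → Fin q, (∀ k, k ≠ i → x k = y k) ∧ f x j ≠ f y j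


section Proof

variable {n q : ℕ} (f : (Fin n → Fin q) → (Fin n → Fin q))

lemma foldl_apply (L : List (Finset (Fin n))) (g : (Fin n → Fin q) → (Fin n → Fin q))
    (x : Fin n → Fin q) :
    (L.foldl (fun g P => updStep f P ∘ g) g) x = applySched f L (g x) := by
  induction L generalizing g x with
  | nil => rfl
  | cons P L ih =>
      simp only [applySched, List.foldl_cons]
      rw [ih, ih]
      rfl

lemma applySched_append (L1 L2 : List (Finset (Fin n))) (x : Fin n → Fin q) :
    applySched f (L1 ++ L2) x = applySched f L2 (applySched f L1 x) := by
  simp only [applySched, List.foldl_append]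
  rw [foldl_apply]
  rfl

lemma applySched_cons (P : Finset (Fin n)) (L : List (Finset (Fin n))) (x : Fin n → Fin q) :
    applySched f (P :: L) x = applySched f L (updStep f P x) := by
  simp only [applySched, List.foldl_cons]
  rw [foldl_apply]
  rfl

lemma applySched_notMem (L : List (Finset (Fin n))) (j : Fin n) (h : ∀ P ∈ L, j ∉ P)
    (x : Fin n → Fin q) : applySched f L x j = x j := by
  induction L generalizing x with
  | nil => rfl
  | cons P L ih =>
      have htail : ∀ Q ∈ L, j ∉ Q := fun Q hQ => h Q (List.mem_cons_of_mem _ hQ)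
      rw [applySched_cons, ih htail _]
      simp [updStep, h P List.mem_cons_self]

variable {B : List (Finset (Fin n))} (hB : IsOrdPartition B)
include hB

lemma partIdx_lt (v : Fin n) : partIdx B v < B.length := by
  apply List.findIdx_lt_length_of_exists
  obtain ⟨P, hP, hv⟩ := hB.2.2 v
  exact ⟨P, hP, by simpa using hv⟩

lemma mem_part (v : Fin n) : v ∈ B[partIdx B v]'(partIdx_lt hB v) := by
  have := @List.findIdx_getElem _ (fun P => decide (v ∈ P)) B (partIdx_lt hB v)
  have h2 : v ∈ B[List.findIdx (fun P => decide (v ∈ P)) B]'(partIdx_lt hB v) := by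
    simpa using this
  exact h2

lemma notMem_of_ne (v : Fin n) (m : ℕ) (hm : m < B.length) (hne : m ≠ partIdx B v) :
    v ∉ B[m] := by
  rcases lt_or_gt_of_ne hne with h | h
  · have := @List.not_of_lt_findIdx _ (fun P => decide (v ∈ P)) B m h
    simpa using this
  · have hd := List.pairwise_iff_getElem.1 hB.2.1 _ _ (partIdx_lt hB v) hm h
    intro hv
    exact Finset.disjoint_left.1 hd (mem_part hB v) hv

lemma applySched_eq_prefix (x : Fin n → Fin q) (i : Fin n) :
    applySched f B x i = applySched f (B.take (partIdx B i + 1)) x i := by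
  conv_lhs => rw [← List.take_append_drop (partIdx B i + 1) B]
  rw [applySched_append]
  apply applySched_notMem
  intro P hP
  rw [List.mem_iff_getElem] at hP
  obtain ⟨m, hm, rfl⟩ := hP
  rw [List.getElem_drop]
  apply notMem_of_ne hB
  omega

lemma key (x : Fin n → Fin q) (j : Fin n) :
    applySched f B x j =
      f (fun i => if partIdx B i < partIdx B j then applySched f B x i else x i) j := by
  have hkl : partIdx B j < B.length := partIdx_lt hB j
  rw [applySched_eq_prefix f hB x j]
  have htk : B.take (partIdx B j + 1) = B.take (partIdx B j) ++ [B[partIdx B j]] := by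
    rw [List.take_succ]
    simp [List.getElem?_eq_getElem hkl]
  rw [htk, applySched_append, applySched_cons]
  have hjk : j ∈ B[partIdx B j] := mem_part hB j
  have h2 : applySched f [] (updStep f B[partIdx B j] (applySched f (B.take (partIdx B j)) x)) j
      = f (applySched f (B.take (partIdx B j)) x) j := by
    simp [applySched, updStep, hjk]
  rw [h2]
  congr 1
  funext i
  by_cases hik : partIdx B i < partIdx B j
  · simp only [hik, if_pos]
    rw [applySched_eq_prefix f hB x i]
    have h1 : B.take (partIdx B j) =
        B.take (partIdx B i + 1) ++ (B.take (partIdx B j)).drop (partIdx B i + 1) := by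
      conv_lhs => rw [← List.take_append_drop (partIdx B i + 1) (B.take (partIdx B j))]
      rw [List.take_take, min_eq_left (by omega)]
    rw [h1, applySched_append]
    apply applySched_notMem
    intro P hP
    rw [List.mem_iff_getElem] at hP
    obtain ⟨m, hm, rfl⟩ := hP
    rw [List.getElem_drop, List.getElem_take]
    apply notMem_of_ne hB
    omega
  · simp only [hik, if_neg, not_false_iff]
    apply applySched_notMem
    intro P hP
    rw [List.mem_iff_getElem] at hP
    obtain ⟨m, hm, rfl⟩ := hP
    rw [List.getElem_take]
    apply notMem_of_ne hB
    have hml : m < partIdx B j := by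
      have := hm
      simp only [List.length_take, lt_min_iff] at this
      exact this.1
    omega

omit hB

lemma insens (j : Fin n) : ∀ (m : ℕ) (z z' : Fin n → Fin q),
    (Finset.filter (fun i => z i ≠ z' i) Finset.univ).card ≤ m →
    (∀ i, z i ≠ z' i → ¬ Arc f i j) → f z j = f z' j := by
  intro m
  induction m with
  | zero =>
      intro z z' hc _
      have : z = z' := by
        funext i
        by_contra hne
        have hmem : i ∈ Finset.filter (fun i => z i ≠ z' i) Finset.univ := by simp [hne]
        have := Finset.card_pos.2 ⟨i, hmem⟩
        omega
      rw [this]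
  | succ m ih =>
      intro z z' hc harc
      by_cases hS : (Finset.filter (fun i => z i ≠ z' i) Finset.univ).Nonempty
      · obtain ⟨i, hi⟩ := hS
        simp only [Finset.mem_filter, Finset.mem_univ, true_and] at hi
        set z'' := Function.update z i (z' i) with hz''
        have h1 : f z j = f z'' j := by
          by_contra hne
          exact harc i hi ⟨z, z'', fun k hk => (Function.update_of_ne hk _ _).symm, hne⟩
        rw [h1]
        have hagree : ∀ k, k ≠ i → z'' k = z k := fun k hk => Function.update_of_ne hk _ _
        apply ih
        · have hsub : Finset.filter (fun k => z'' k ≠ z' k) Finset.univ ⊆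
              (Finset.filter (fun k => z k ≠ z' k) Finset.univ).erase i := by
            intro k hk
            simp only [Finset.mem_filter, Finset.mem_univ, true_and] at hk
            have hki : k ≠ i := by
              intro h; subst h; exact hk (by simp [hz''])
            rw [Finset.mem_erase]
            constructor
            · exact hki
            · simp only [Finset.mem_filter, Finset.mem_univ, true_and]
              rwa [hagree k hki] at hk
          have hle := Finset.card_le_card hsub
          have h2 := Finset.card_erase_of_mem (show
            i ∈ Finset.filter (fun k => z k ≠ z' k) Finset.univ by simp [hi])
          omega
        · intro k hk
          apply harc k
          by_cases hki : k = i
          · subst hki; exact hi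
          · rwa [hagree k hki] at hk
      · rw [Finset.not_nonempty_iff_eq_empty] at hS
        apply ih
        · simp [hS]
        · exact harc

end Proof

/-- If the labelings induced by two block-sequential update schedules on the interaction
digraph agree, then the dynamics agree. -/
theorem statement0 {n q : ℕ} (f : (Fin n → Fin q) → (Fin n → Fin q))
    (B B' : List (Finset (Fin n))) (hB : IsOrdPartition B) (hB' : IsOrdPartition B')
    (hlab : ∀ i j : Fin n, Arc f i j →
      (partIdx B i < partIdx B j ↔ partIdx B' i < partIdx B' j)) :
    applySched f B = applySched f B' := by
  funext x
  have main : ∀ (k : ℕ) (j : Fin n), partIdx B j < k →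
      applySched f B x j = applySched f B' x j := by
    intro k
    induction k with
    | zero => intro j hj; omega
    | succ k ih =>
        intro j hj
        rw [key f hB x j, key f hB' x j]
        apply insens f j (Fintype.card (Fin n))
        · exact Finset.card_le_card (Finset.subset_univ _) |>.trans (by simp)
        · intro i hne harc
          apply hne
          by_cases h : partIdx B i < partIdx B j
          · have h' : partIdx B' i < partIdx B' j := (hlab i j harc).1 h
            simp only [h, h', if_pos]
            exact ih i (by omega)
          · have h' : ¬ partIdx B' i < partIdx B' j := fun hc => h ((hlab i j harc).2 hc)
            simp [h, h']
  funext j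
  exact main (partIdx B j + 1) j (Nat.lt_succ_self _)


end UD
end

section
/- A labeling lab : A → {⊕,⊖} of a finite loopless digraph G = (V,A) is valid (corresponds to some block-sequential update schedule) if and only if the multidigraph obtained by keeping ⊕-arcs with their orientation and reversing the orientation of ⊖-arcs contains no cycle with at least one ⊖-labeled arc. -/
namespace UD

variable {V : Type*}

-- auxiliary
def negcount (lab : V × V → Bool) (l : List (V × V)) : ℕ :=
  (l.filter (fun a => lab a = false)).length

def ind (lab : V × V → Bool) (a : V × V) : ℕ := if lab a then 0 else 1

lemma negcount_cons (lab : V × V → Bool) (a : V × V) (l : List (V × V)) :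
    negcount lab (a :: l) = ind lab a + negcount lab l := by
  simp only [negcount, ind, List.filter_cons]
  cases h : lab a <;> simp [Nat.add_comm]

lemma descend (A : Finset (V × V)) (lab : V × V → Bool) (h : V → ℕ)
    (hstep : ∀ a ∈ A, h (dst lab a) + ind lab a ≤ h (src lab a)) :
    ∀ l x y, IsRevWalk A lab l x y → h y + negcount lab l ≤ h x := by
  intro l
  induction l with
  | nil => intro x y hw; exact absurd rfl hw.1
  | cons a t ih =>
    intro x y hw
    obtain ⟨-, hmem, hch, hhd, hlast⟩ := hw
    simp only [List.head?_cons, Option.map_some, Option.some.injEq] at hhd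
    subst hhd
    rw [negcount_cons]
    cases t with
    | nil =>
      simp only [List.getLast?_singleton, Option.map_some, Option.some.injEq] at hlast
      subst hlast
      exact hstep a (hmem a (by simp))
    | cons b t' =>
      have hch' := List.isChain_cons_cons.mp hch
      have hw' : IsRevWalk A lab (b :: t') (src lab b) y := by
        refine ⟨by simp, fun c hc => hmem c (by simp [hc]), hch'.2, by simp, ?_⟩
        rwa [List.getLast?_cons_cons] at hlast
      have := ih (src lab b) y hw'
      rw [← hch'.1] at this
      have := Nat.add_le_add_right this (ind lab a)
      calc h y + (ind lab a + negcount lab (b :: t'))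
          = h y + negcount lab (b :: t') + ind lab a := by ring
        _ ≤ h (dst lab a) + ind lab a := this
        _ ≤ h (src lab a) := hstep a (hmem a (by simp))

lemma negcount_pos (lab : V × V → Bool) (l : List (V × V)) (h : Negative lab l) :
    1 ≤ negcount lab l := by
  obtain ⟨a, ha, hf⟩ := h
  have : a ∈ l.filter (fun a => lab a = false) := by
    simp [List.mem_filter, ha, hf]
  exact List.length_pos_iff.mpr (List.ne_nil_of_mem this)


lemma dup_split {α : Type*} {a : α} :
    ∀ {l : List α}, l.Duplicate a → ∃ l1 l2 l3 : List α, l = l1 ++ a :: l2 ++ a :: l3 := by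
  intro l h
  induction h with
  | cons_mem hm =>
    obtain ⟨l2, l3, rfl⟩ := List.append_of_mem hm
    exact ⟨[], l2, l3, by simp⟩
  | @cons_duplicate y l' _ ih =>
    obtain ⟨l1, l2, l3, rfl⟩ := ih
    exact ⟨y :: l1, l2, l3, by simp⟩

lemma closed_subwalk(A : Finset (V × V)) (lab : V × V → Bool) (a : V × V)
    (l1 l2 l3 : List (V × V)) (x y : V)
    (hw : IsRevWalk A lab (l1 ++ a :: l2 ++ a :: l3) x y) :
    IsRevWalk A lab (a :: l2) (src lab a) (src lab a) := by
  obtain ⟨-, hmem, hch, -, -⟩ := hw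
  have hinf : ((a :: l2) ++ [a]) <:+: (l1 ++ a :: l2 ++ a :: l3) := by
    refine ⟨l1, l3, ?_⟩; simp
  have hch2 : ((a :: l2) ++ [a]).Chain' (fun a b => dst lab a = src lab b) :=
    hch.infix hinf
  unfold List.Chain' at hch2
  rw [List.isChain_append] at hch2
  obtain ⟨hc1, -, hlink⟩ := hch2
  refine ⟨by simp, fun c hc => hmem c (by simp at hc ⊢; tauto), hc1, by simp, ?_⟩
  have hne : (a :: l2) ≠ [] := by simp
  rw [List.getLast?_eq_getLast hne]
  simp only [Option.map_some, Option.some.injEq]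
  exact hlink _ (by rw [List.getLast?_eq_getLast hne]; rfl) a rfl

lemma negcount_le_card [DecidableEq V] (A : Finset (V × V)) (lab : V × V → Bool)
    (hv : Valid A lab) {l : List (V × V)} {x y : V} (hw : IsRevWalk A lab l x y) :
    negcount lab l ≤ A.card := by
  set F := l.filter (fun a => lab a = false) with hF
  have hnd : F.Nodup := by
    by_contra hcon
    obtain ⟨a, hdup⟩ := List.exists_duplicate_iff_not_nodup.mpr hcon
    have hfa : lab a = false := by
      have := hdup.mem
      rw [hF, List.mem_filter] at this
      simpa using this.2
    have hdl : l.Duplicate a := hdup.mono_sublist List.filter_sublist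
    obtain ⟨l1, l2, l3, rfl⟩ := dup_split hdl
    have hcw := closed_subwalk A lab a l1 l2 l3 x y hw
    exact hv _ ⟨_, hcw⟩ ⟨a, by simp, hfa⟩
  have hsub : F.toFinset ⊆ A := by
    intro c hc
    rw [List.mem_toFinset, hF, List.mem_filter] at hc
    exact hw.2.1 c hc.1
  calc negcount lab l = F.length := rfl
    _ = F.toFinset.card := (List.toFinset_card_of_nodup hnd).symm
    _ ≤ A.card := Finset.card_le_card hsub

lemma walk_cons (A : Finset (V × V)) (lab : V × V → Bool) {a : V × V} (ha : a ∈ A)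
    {l : List (V × V)} {y : V} (hw : IsRevWalk A lab l (dst lab a) y) :
    IsRevWalk A lab (a :: l) (src lab a) y := by
  obtain ⟨hne, hmem, hch, hhd, hlast⟩ := hw
  refine ⟨by simp, fun c hc => ?_, ?_, by simp, ?_⟩
  · rcases List.mem_cons.mp hc with h | h
    · exact h ▸ ha
    · exact hmem c h
  · unfold List.Chain'
    rw [List.isChain_cons]
    refine ⟨fun b hb => ?_, hch⟩
    rw [List.head?_eq_head hne] at hhd hb
    simp only [Option.map_some, Option.some.injEq] at hhd
    cases hb
    exact hhd.symm
  · obtain ⟨b, t, rfl⟩ := List.exists_cons_of_ne_nil hne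
    rwa [List.getLast?_cons_cons]

lemma walk_single (A : Finset (V × V)) (lab : V × V → Bool) {a : V × V} (ha : a ∈ A) :
    IsRevWalk A lab [a] (src lab a) (dst lab a) :=
  ⟨by simp, by simp [ha], List.isChain_singleton _, by simp, by simp⟩

/-- set of negative-arc counts of walks starting at `v` (including `0`). -/
def cset (A : Finset (V × V)) (lab : V × V → Bool) (v : V) : Set ℕ :=
  {n | n = 0 ∨ ∃ l y, IsRevWalk A lab l v y ∧ negcount lab l = n}

noncomputable def gfun (A : Finset (V × V)) (lab : V × V → Bool) (v : V) : ℕ :=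
  sSup (cset A lab v)

lemma cset_nonempty (A : Finset (V × V)) (lab : V × V → Bool) (v : V) :
    (cset A lab v).Nonempty := ⟨0, Or.inl rfl⟩

lemma cset_bdd [DecidableEq V] (A : Finset (V × V)) (lab : V × V → Bool)
    (hv : Valid A lab) (v : V) : BddAbove (cset A lab v) := by
  refine ⟨A.card, fun n hn => ?_⟩
  rcases hn with rfl | ⟨l, y, hw, rfl⟩
  · exact Nat.zero_le _
  · exact negcount_le_card A lab hv hw

lemma gfun_mem [DecidableEq V] (A : Finset (V × V)) (lab : V × V → Bool)
    (hv : Valid A lab) (v : V) : gfun A lab v ∈ cset A lab v :=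
  Nat.sSup_mem (cset_nonempty A lab v) (cset_bdd A lab hv v)

lemma gfun_step [DecidableEq V] (A : Finset (V × V)) (lab : V × V → Bool)
    (hv : Valid A lab) {a : V × V} (ha : a ∈ A) :
    gfun A lab (dst lab a) + ind lab a ≤ gfun A lab (src lab a) := by
  have hmem : gfun A lab (dst lab a) + ind lab a ∈ cset A lab (src lab a) := by
    rcases gfun_mem A lab hv (dst lab a) with h0 | ⟨l, y, hw, hc⟩
    · rw [h0]
      exact Or.inr ⟨[a], dst lab a, walk_single A lab ha, by
        show negcount lab [a] = 0 + ind lab a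
        rw [negcount_cons]; simp [negcount, Nat.add_comm]⟩
    · exact Or.inr ⟨a :: l, y, walk_cons A lab ha hw, by rw [negcount_cons, hc]; ring⟩
  exact le_csSup (cset_bdd A lab hv _) hmem

lemma findIdx_map' {α β : Type*} (f : α → β) (p : β → Bool) :
    ∀ L : List α, (L.map f).findIdx p = L.findIdx (fun k => p (f k)) := by
  intro L
  induction L with
  | nil => simp
  | cons c T ih => simp [List.findIdx_cons, ih]

lemma sorted_findIdx_lt :
    ∀ L : List ℕ, L.Pairwise (· < ·) → ∀ {a b : ℕ}, a ∈ L → b ∈ L → a < b →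
      L.findIdx (fun k => decide (a = k)) < L.findIdx (fun k => decide (b = k)) := by
  intro L
  induction L with
  | nil => intro _ a b ha; simp at ha
  | cons c T ih =>
    intro hs a b ha hb hab
    rw [List.pairwise_cons] at hs
    have ha' := List.mem_cons.mp ha
    have hb' := List.mem_cons.mp hb
    by_cases hac : a = c
    · have hbc : b ≠ c := by omega
      rw [List.findIdx_cons, List.findIdx_cons]
      have h1 : (decide (a = c)) = true := by simp [hac]
      have h2 : (decide (b = c)) = false := by simp [hbc]
      rw [h1, h2]
      simp
    · have hca : c < a := hs.1 a (ha'.resolve_left hac)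
      have hbc : b ≠ c := by omega
      rw [List.findIdx_cons, List.findIdx_cons]
      have h1 : (decide (a = c)) = false := by simp [hac]
      have h2 : (decide (b = c)) = false := by simp [hbc]
      rw [h1, h2]
      simp only [cond_false]
      have := ih hs.2 (ha'.resolve_left hac) (hb'.resolve_left hbc) hab
      omega

lemma sorted_findIdx_le (L : List ℕ) (hs : L.Pairwise (· < ·)) {a b : ℕ}
    (ha : a ∈ L) (hb : b ∈ L) (hab : a ≤ b) :
    L.findIdx (fun k => decide (a = k)) ≤ L.findIdx (fun k => decide (b = k)) := by
  rcases Nat.lt_or_ge a b with h | h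
  · exact le_of_lt (sorted_findIdx_lt L hs ha hb h)
  · have : a = b := by omega
    subst this; rfl

lemma partIdx_eq [Fintype V] [DecidableEq V] (g : V → ℕ) (L : List ℕ) (v : V) :
    partIdx (L.map (fun k => Finset.univ.filter (fun v => g v = k))) v
      = L.findIdx (fun k => decide (g v = k)) := by
  rw [partIdx, findIdx_map']
  congr 1
  funext k
  simp [Finset.mem_filter]


/-- A labeling is realized by some block-sequential update schedule iff the multidigraph
obtained by reversing the `⊖`-arcs has no cycle using a `⊖`-arc. -/
theorem statement2 {V : Type*} [Fintype V] [DecidableEq V] (A : Finset (V × V))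
    (hloop : ∀ a ∈ A, a.1 ≠ a.2) (lab : V × V → Bool) :
    (∃ B : List (Finset V), IsOrdPartition B ∧ ∀ a ∈ A, lab a = labSched B a) ↔
      Valid A lab := by
  constructor
  · rintro ⟨B, -, hagree⟩ l ⟨x, hw⟩ hneg
    have hstep : ∀ a ∈ A, partIdx B (dst lab a) + ind lab a ≤ partIdx B (src lab a) := by
      intro a ha
      have h := (hagree a ha).symm
      rw [labSched] at h
      cases hl : lab a
      · rw [hl, decide_eq_false_iff_not, Nat.not_le] at h
        simp [src, dst, ind, hl]
        omega
      · rw [hl, decide_eq_true_eq] at h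
        simp [src, dst, ind, hl]
        omega
    have h1 := descend A lab (partIdx B) hstep l x x hw
    have h2 := negcount_pos lab l hneg
    omega
  · intro hv
    set L : List ℕ := ((Finset.univ.image (gfun A lab)).sort (· ≤ ·)) with hLdef
    have hLs : L.Pairwise (· < ·) := List.sortedLT_iff_pairwise.mp (Finset.sortedLT_sort _)
    have hLmem : ∀ v : V, gfun A lab v ∈ L := fun v => by
      rw [hLdef, Finset.mem_sort]
      exact Finset.mem_image_of_mem _ (Finset.mem_univ v)
    set B : List (Finset V) := L.map (fun k => Finset.univ.filter (fun v => gfun A lab v = k))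
      with hBdef
    have hidx : ∀ v, partIdx B v = L.findIdx (fun k => decide (gfun A lab v = k)) :=
      fun v => partIdx_eq (gfun A lab) L v
    refine ⟨B, ⟨?_, ?_, ?_⟩, ?_⟩
    · intro P hP
      rw [hBdef, List.mem_map] at hP
      obtain ⟨k, hk, rfl⟩ := hP
      rw [hLdef, Finset.mem_sort, Finset.mem_image] at hk
      obtain ⟨v, -, rfl⟩ := hk
      exact ⟨v, by simp⟩
    · rw [hBdef]
      refine List.Pairwise.map _ (fun k1 k2 h => ?_) hLs
      rw [Finset.disjoint_left]
      intro v h1 h2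
      rw [Finset.mem_filter] at h1 h2
      omega
    · intro v
      refine ⟨Finset.univ.filter (fun w => gfun A lab w = gfun A lab v), ?_, by simp⟩
      rw [hBdef, List.mem_map]
      exact ⟨gfun A lab v, hLmem v, rfl⟩
    · intro a ha
      have hstep := gfun_step A lab hv ha
      rw [labSched, hidx, hidx]
      cases hl : lab a
      · simp [src, dst, ind, hl] at hstep
        have := sorted_findIdx_lt L hLs (hLmem a.1) (hLmem a.2) (by omega)
        symm
        rw [decide_eq_false_iff_not, Nat.not_le]
        exact this
      · simp [src, dst, ind, hl] at hstep
        have := sorted_findIdx_le L hLs (hLmem a.2) (hLmem a.1) (by omega)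
        symm
        rw [decide_eq_true_eq]
        exact this

end UD
end

section
/- For any valid labeling lab of a digraph G = (V,A), the set F_lab = { a ∈ A : lab(a) = ⊕ } of positively labeled arcs is a feedback arc set of G. -/
namespace UD

variable {V : Type*}

/-- For any valid labeling, the set of `⊕`-labeled arcs is a feedback arc set. -/
theorem statement3 {V : Type*} [DecidableEq V] (A : Finset (V × V)) (lab : V × V → Bool)
    (h : Valid A lab) :
    IsFAS A (A.filter (fun a => lab a = true)) := by
  refine ⟨Finset.filter_subset _ _, ?_⟩
  intro l x hw
  obtain ⟨hne, hmem, hch, hhd, hlast⟩ := hw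
  have hneg : ∀ a ∈ l, a ∈ A ∧ lab a = false := by
    intro a ha
    have := hmem a ha
    simp only [Finset.mem_sdiff, Finset.mem_filter] at this
    refine ⟨this.1, ?_⟩
    rcases Bool.eq_false_or_eq_true (lab a) with h' | h'
    · exact absurd ⟨this.1, h'⟩ this.2
    · exact h'
  refine h l.reverse ⟨x, ?_, ?_, ?_, ?_, ?_⟩ ?_
  · simpa using hne
  · intro a ha; exact (hneg a (by simpa using ha)).1
  · unfold List.Chain' at hch ⊢
    rw [List.isChain_reverse]
    rw [List.isChain_iff_getElem] at hch ⊢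
    intro i hi
    have h1 := (hneg _ (List.getElem_mem (l := l) (n := i) (by omega))).2
    have h2 := (hneg _ (List.getElem_mem (l := l) (n := i+1) (by omega))).2
    have := hch i hi
    simp only [flip, dst, src, h1, h2] at *
    simpa using this.symm
  · rw [List.head?_reverse]
    have ha : l.getLast? = some (l.getLast hne) := List.getLast?_eq_getLast hne
    have hm : l.getLast hne ∈ l := List.getLast_mem hne
    rw [ha] at hlast ⊢
    simp only [Option.map_some] at hlast ⊢
    rw [src, if_neg (by simp [(hneg _ hm).2])]
    simpa using hlast
  · rw [List.getLast?_reverse]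
    have ha : l.head? = some (l.head hne) := List.head?_eq_head hne
    have hm : l.head hne ∈ l := List.head_mem hne
    rw [ha] at hhd ⊢
    simp only [Option.map_some] at hhd ⊢
    rw [dst, if_neg (by simp [(hneg _ hm).2])]
    simpa using hhd
  · exact ⟨l.head hne, by simp [List.head_mem hne], (hneg _ (List.head_mem hne)).2⟩

end UD
end

section
/- If F ⊆ A is a minimal feedback arc set of a digraph G = (V,A) (minimal under inclusion), then the labeling lab with lab(a) = ⊕ for a ∈ F and lab(a) = ⊖ otherwise is a valid labeling of G. -/
namespace UD

variable {V : Type*}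

section Proof4

lemma isWalk_singleton {A : Finset (V × V)} {a : V × V} (h : a ∈ A) : IsWalk A [a] a.1 a.2 :=
  ⟨by simp, by simpa, List.isChain_singleton _, by simp, by simp⟩

lemma isWalk_append {A : Finset (V × V)} {l m : List (V × V)} {x y z : V}
    (hl : IsWalk A l x y) (hm : IsWalk A m y z) : IsWalk A (l ++ m) x z := by
  obtain ⟨hl0, hlA, hlc, hlh, hll⟩ := hl
  obtain ⟨hm0, hmA, hmc, hmh, hml⟩ := hm
  refine ⟨by simp [hl0], ?_, ?_, ?_, ?_⟩
  · intro a ha; rcases List.mem_append.1 ha with h | h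
    exacts [hlA a h, hmA a h]
  · rw [List.Chain', List.isChain_append]
    refine ⟨hlc, hmc, ?_⟩
    intro a ha b hb
    rw [ha] at hll; rw [hb] at hmh
    simp only [Option.map_some] at hll hmh
    rw [Option.some_inj] at hll hmh
    rw [hll, ← hmh]
  · rwa [List.head?_append_of_ne_nil _ hl0]
  · rwa [List.getLast?_append_of_ne_nil _ hm0]

lemma isWalk_cons {A : Finset (V × V)} {a : V × V} {l : List (V × V)} {x y : V}
    (h : IsWalk A (a :: l) x y) (hl : l ≠ []) :
    x = a.1 ∧ a ∈ A ∧ IsWalk A l a.2 y := by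
  obtain ⟨-, hA, hc, hh, hla⟩ := h
  simp only [List.head?_cons, Option.map_some, Option.some_inj] at hh
  rw [List.Chain', List.isChain_cons] at hc
  have hhead : l.head? = some (l.head hl) := List.head?_eq_head hl
  refine ⟨hh.symm, hA a (by simp), hl, fun c hc' => hA c (by simp [hc']), hc.2, ?_, ?_⟩
  · rw [hhead]
    simp only [Option.map_some, Option.some_inj]
    exact (hc.1 _ hhead).symm
  · rwa [show a :: l = [a] ++ l from rfl, List.getLast?_append_of_ne_nil _ hl] at hla

lemma isRevWalk_cons {A : Finset (V × V)} {lab : V × V → Bool} {a : V × V}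
    {l : List (V × V)} {x y : V}
    (h : IsRevWalk A lab (a :: l) x y) (hl : l ≠ []) :
    x = src lab a ∧ a ∈ A ∧ IsRevWalk A lab l (dst lab a) y := by
  obtain ⟨-, hA, hc, hh, hla⟩ := h
  simp only [List.head?_cons, Option.map_some, Option.some_inj] at hh
  rw [List.Chain', List.isChain_cons] at hc
  have hhead : l.head? = some (l.head hl) := List.head?_eq_head hl
  refine ⟨hh.symm, hA a (by simp), hl, fun c hc' => hA c (by simp [hc']), hc.2, ?_, ?_⟩
  · rw [hhead]
    simp only [Option.map_some, Option.some_inj]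
    exact (hc.1 _ hhead).symm
  · rwa [show a :: l = [a] ++ l from rfl, List.getLast?_append_of_ne_nil _ hl] at hla

lemma isWalk_subset {A B : Finset (V × V)} {l : List (V × V)} {x y : V}
    (h : IsWalk A l x y) (hs : ∀ a ∈ l, a ∈ B) : IsWalk B l x y :=
  ⟨h.1, hs, h.2.2.1, h.2.2.2.1, h.2.2.2.2⟩

lemma isWalk_split {A : Finset (V × V)} {l m : List (V × V)} {x z : V}
    (h : IsWalk A (l ++ m) x z) (hl : l ≠ []) (hm : m ≠ []) :
    ∃ y, IsWalk A l x y ∧ IsWalk A m y z := by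
  obtain ⟨-, hA, hc, hh, hla⟩ := h
  rw [List.Chain', List.isChain_append] at hc
  have hLl : l.getLast? = some (l.getLast hl) := List.getLast?_eq_getLast hl
  have hHm : m.head? = some (m.head hm) := List.head?_eq_head hm
  refine ⟨(l.getLast hl).2, ⟨hl, fun c hc' => hA c (by simp [hc']), hc.1, ?_, ?_⟩,
    ⟨hm, fun c hc' => hA c (by simp [hc']), hc.2.1, ?_, ?_⟩⟩
  · rwa [List.head?_append_of_ne_nil _ hl] at hh
  · rw [hLl]; simp
  · rw [hHm]
    simp only [Option.map_some, Option.some_inj]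
    exact (hc.2.2 _ hLl _ hHm).symm
  · rwa [List.getLast?_append_of_ne_nil _ hm] at hla

/-- The portion of a walk in `insert f B` after the last occurrence of `f`. -/
lemma walk_after_last [DecidableEq V] {B : Finset (V × V)} {f : V × V} :
    ∀ l : List (V × V), ∀ x y : V, IsWalk (insert f B) l x y → f ∈ l →
      y = f.2 ∨ ∃ t, IsWalk B t f.2 y := by
  intro l
  induction l with
  | nil => intro x y _ hmem; simp at hmem
  | cons a l ih =>
    intro x y hw hmem
    by_cases hl : l = []
    · subst hl
      have haf : a = f := by exact (by simpa using hmem : f = a).symm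
      subst haf
      left
      have := hw.2.2.2.2
      simpa using this.symm
    · obtain ⟨-, -, hw'⟩ := isWalk_cons hw hl
      by_cases hf : f ∈ l
      · exact ih _ _ hw' hf
      · have haf : a = f := by
          rcases List.mem_cons.1 hmem with h' | h'
          · exact h'.symm
          · exact absurd h' hf
        subst haf
        right
        refine ⟨l, isWalk_subset hw' fun c hc => ?_⟩
        rcases Finset.mem_insert.1 (hw'.2.1 c hc) with rfl | h'
        · exact absurd hc hf
        · exact h'

/-- Minimality gives, for each `f ∈ F`, either a self-loop or a return walk in `A \ F`. -/
lemma key_minFAS [DecidableEq V] {A F : Finset (V × V)} (h : IsMinFAS A F)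
    {f : V × V} (hf : f ∈ F) : f.2 = f.1 ∨ ∃ s, IsWalk (A \ F) s f.2 f.1 := by
  have hFA : F ⊆ A := h.1.1
  have hacyc : Acyclic (A \ F) := h.1.2
  have hnot := h.2 (F.erase f) (Finset.erase_ssubset hf)
  have hset : A \ F.erase f = insert f (A \ F) := by
    ext a
    simp only [Finset.mem_sdiff, Finset.mem_erase, Finset.mem_insert, not_and]
    by_cases hfa : a = f
    · subst hfa; simp [hFA hf]
    · simp [hfa]
  have hnA : ¬ Acyclic (A \ F.erase f) := fun hA =>
    hnot ⟨(F.erase_subset f).trans hFA, hA⟩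
  rw [hset] at hnA
  simp only [Acyclic, not_forall, not_not] at hnA
  obtain ⟨c, x, hc⟩ := hnA
  have hfc : f ∈ c := by
    by_contra hfc
    refine hacyc c x (isWalk_subset hc fun a ha => ?_)
    rcases Finset.mem_insert.1 (hc.2.1 a ha) with rfl | h'
    · exact absurd ha hfc
    · exact h'
  obtain ⟨p, q, rfl⟩ := List.append_of_mem hfc
  by_cases hp : p = []
  · subst hp
    simp only [List.nil_append] at hc
    have hx : x = f.1 := by
      have := hc.2.2.2.1; simpa using this.symm
    subst hx
    rcases walk_after_last _ _ _ hc (by simp) with h' | h'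
    · exact Or.inl h'.symm
    · exact Or.inr h'
  · obtain ⟨y, hw1, hw2⟩ := isWalk_split hc hp (by simp)
    have hy : y = f.1 := by
      have := hw2.2.2.2.1; simpa using this.symm
    subst hy
    have hglue : IsWalk (insert f (A \ F)) ((f :: q) ++ p) f.1 f.1 :=
      isWalk_append hw2 hw1
    rcases walk_after_last _ _ _ hglue (by simp) with h' | h'
    · exact Or.inl h'.symm
    · exact Or.inr h'

lemma walkOr_append {A : Finset (V × V)} {m m' : List (V × V)} {x y z : V}
    (h1 : IsWalk A m x y ∨ (m = [] ∧ x = y))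
    (h2 : IsWalk A m' y z ∨ (m' = [] ∧ y = z)) :
    IsWalk A (m ++ m') x z ∨ (m ++ m' = [] ∧ x = z) := by
  rcases h1 with h1 | ⟨rfl, rfl⟩
  · rcases h2 with h2 | ⟨rfl, rfl⟩
    · exact Or.inl (isWalk_append h1 h2)
    · exact Or.inl (by simpa using h1)
  · simpa using h2

lemma rev_arc [DecidableEq V] {A F : Finset (V × V)} (h : IsMinFAS A F)
    {a : V × V} (ha : a ∈ A) :
    ∃ m, (IsWalk (A \ F) m (dst (fun a => decide (a ∈ F)) a) (src (fun a => decide (a ∈ F)) a) ∨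
        (m = [] ∧ dst (fun a => decide (a ∈ F)) a = src (fun a => decide (a ∈ F)) a)) ∧
      ((fun a => decide (a ∈ F)) a = false → m ≠ []) := by
  by_cases haF : a ∈ F
  · have hsrc : src (fun a => decide (a ∈ F)) a = a.1 := by simp [src, haF]
    have hdst : dst (fun a => decide (a ∈ F)) a = a.2 := by simp [dst, haF]
    rw [hsrc, hdst]
    rcases key_minFAS h haF with h' | ⟨s, hs⟩
    · exact ⟨[], Or.inr ⟨rfl, h'⟩, by simp [haF]⟩
    · exact ⟨s, Or.inl hs, by simp [haF]⟩
  · have hsrc : src (fun a => decide (a ∈ F)) a = a.2 := by simp [src, haF]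
    have hdst : dst (fun a => decide (a ∈ F)) a = a.1 := by simp [dst, haF]
    rw [hsrc, hdst]
    exact ⟨[a], Or.inl (isWalk_singleton (Finset.mem_sdiff.2 ⟨ha, haF⟩)), by simp⟩

lemma rev_walk [DecidableEq V] {A F : Finset (V × V)} (h : IsMinFAS A F) :
    ∀ l : List (V × V), ∀ x y : V, IsRevWalk A (fun a => decide (a ∈ F)) l x y →
      ∃ m, (IsWalk (A \ F) m y x ∨ (m = [] ∧ y = x)) ∧
        (Negative (fun a => decide (a ∈ F)) l → m ≠ []) := by
  intro l
  induction l with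
  | nil => intro x y hw; exact absurd rfl hw.1
  | cons a l ih =>
    intro x y hw
    by_cases hl : l = []
    · subst hl
      have hx : x = src (fun a => decide (a ∈ F)) a := by
        have := hw.2.2.2.1; simpa using this.symm
      have hy : y = dst (fun a => decide (a ∈ F)) a := by
        have := hw.2.2.2.2; simpa using this.symm
      have ha : a ∈ A := hw.2.1 a (by simp)
      obtain ⟨m, hm, hne⟩ := rev_arc h ha
      subst hx; subst hy
      refine ⟨m, hm, fun hneg => hne ?_⟩
      simpa [Negative] using hneg
    · obtain ⟨hx, ha, hw'⟩ := isRevWalk_cons hw hl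
      obtain ⟨m', hm', hne'⟩ := ih _ _ hw'
      obtain ⟨ma, hma, hnea⟩ := rev_arc h ha
      subst hx
      refine ⟨m' ++ ma, walkOr_append hm' hma, fun hneg => ?_⟩
      obtain ⟨b, hb, hbf⟩ := hneg
      rcases List.mem_cons.1 hb with rfl | hb'
      · simp [hnea hbf]
      · simp [hne' ⟨b, hb', hbf⟩]

end Proof4

/-- The labeling whose `⊕`-arcs are exactly a minimal feedback arc set is valid. -/
theorem statement4 {V : Type*} [DecidableEq V] (A F : Finset (V × V))
    (h : IsMinFAS A F) :
    Valid A (fun a => decide (a ∈ F)) := by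
  intro l hl hneg
  obtain ⟨x, hw⟩ := hl
  obtain ⟨m, hm, hne⟩ := rev_walk h l x x hw
  rcases hm with hm | ⟨rfl, -⟩
  · exact h.1.2 m x hm
  · exact hne hneg rfl

end UD
end

section
/- The map lab ↦ F_lab = { a ∈ A : lab(a) = ⊕ } is a bijection between the set of minimal valid labelings of a digraph G (valid labelings whose set of ⊕-arcs is minimal under inclusion among valid labelings) and the set of minimal feedback arc sets of G. -/
namespace UD

variable {V : Type*}

/-- `lab` is a minimal valid labeling: it is valid (and labels `⊖` outside `A`), and its set
of `⊕`-arcs is minimal under inclusion among those of valid labelings. -/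
def MinValidLab [DecidableEq V] (A : Finset (V × V)) (lab : V × V → Bool) : Prop :=
  Valid A lab ∧ (∀ a, a ∉ A → lab a = false) ∧
    ∀ lab' : V × V → Bool, Valid A lab' →
      A.filter (fun a => lab' a = true) ⊆ A.filter (fun a => lab a = true) →
      A.filter (fun a => lab' a = true) = A.filter (fun a => lab a = true)


/-! ### Auxiliary lemmas for statement5 -/

lemma aux_chain'_mem_imp {α : Type*} {R S : α → α → Prop} :
    ∀ {l : List α}, l.Chain' R → (∀ a ∈ l, ∀ b ∈ l, R a b → S a b) → l.Chain' S
  | [], _, _ => List.isChain_nil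
  | [_], _, _ => List.isChain_singleton _
  | a :: b :: t, h, hm => by
    simp only [List.Chain', List.isChain_cons_cons] at h ⊢
    refine ⟨hm a (by simp) b (by simp) h.1, aux_chain'_mem_imp h.2 fun x hx y hy hr =>
      hm x (List.mem_cons_of_mem _ hx) y (List.mem_cons_of_mem _ hy) hr⟩

lemma aux_pair_sublist {α : Type*} {a : α} :
    ∀ {l : List α}, List.Sublist [a, a] l → ∃ l1 l2 l3, l = l1 ++ a :: (l2 ++ a :: l3) := by
  intro l h
  induction l with
  | nil => simp at h
  | cons b t ih =>
    cases h with
    | cons _ h => obtain ⟨l1, l2, l3, rfl⟩ := ih h; exact ⟨b :: l1, l2, l3, rfl⟩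
    | cons_cons _ h =>
      have ha : a ∈ t := h.subset (by simp)
      obtain ⟨s, u, rfl⟩ := List.append_of_mem ha
      exact ⟨[], s, u, rfl⟩

/-- Monotone map along a reversed walk (weak version). -/
lemma revwalk_le {α : Type*} [Preorder α] {A : Finset (V × V)} {lab : V × V → Bool}
    {g : V → α} :
    ∀ {l : List (V × V)} {x y : V}, IsRevWalk A lab l x y →
      (∀ a ∈ l, g (dst lab a) ≤ g (src lab a)) → g y ≤ g x := by
  intro l
  induction l with
  | nil => intro x y h; exact absurd rfl h.1
  | cons a t ih =>
    intro x y h hg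
    obtain ⟨-, hmem, hch, hhd, hlast⟩ := h
    have hx : src lab a = x := by simpa using hhd
    cases t with
    | nil =>
      have hy : dst lab a = y := by simpa using hlast
      rw [← hx, ← hy]
      exact hg a (by simp)
    | cons b t' =>
      have hstep : dst lab a = src lab b := (List.isChain_cons_cons.1 hch).1
      have htail : IsRevWalk A lab (b :: t') (src lab b) y :=
        ⟨by simp, fun c hc => hmem c (List.mem_cons_of_mem _ hc),
          (List.isChain_cons_cons.1 hch).2, by simp,
          by rw [← hlast, List.getLast?_cons_cons]⟩
      calc g y ≤ g (src lab b) := ih htail fun c hc => hg c (List.mem_cons_of_mem _ hc)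
        _ = g (dst lab a) := by rw [hstep]
        _ ≤ g (src lab a) := hg a (by simp)
        _ = g x := by rw [hx]

/-- Monotone map along a reversed walk (strict version). -/
lemma revwalk_lt {α : Type*} [Preorder α] {A : Finset (V × V)} {lab : V × V → Bool}
    {g : V → α} :
    ∀ {l : List (V × V)} {x y : V}, IsRevWalk A lab l x y →
      (∀ a ∈ l, g (dst lab a) ≤ g (src lab a)) →
      (∃ a ∈ l, g (dst lab a) < g (src lab a)) → g y < g x := by
  intro l
  induction l with
  | nil => intro x y h; exact absurd rfl h.1
  | cons a t ih =>
    intro x y h hg hst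
    obtain ⟨-, hmem, hch, hhd, hlast⟩ := h
    have hx : src lab a = x := by simpa using hhd
    cases t with
    | nil =>
      have hy : dst lab a = y := by simpa using hlast
      obtain ⟨c, hc, hlt⟩ := hst
      rw [List.mem_singleton] at hc
      subst hc
      rw [← hx, ← hy]
      exact hlt
    | cons b t' =>
      have hstep : dst lab a = src lab b := (List.isChain_cons_cons.1 hch).1
      have htail : IsRevWalk A lab (b :: t') (src lab b) y :=
        ⟨by simp, fun c hc => hmem c (List.mem_cons_of_mem _ hc),
          (List.isChain_cons_cons.1 hch).2, by simp,
          by rw [← hlast, List.getLast?_cons_cons]⟩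
      have hgt : ∀ c ∈ b :: t', g (dst lab c) ≤ g (src lab c) :=
        fun c hc => hg c (List.mem_cons_of_mem _ hc)
      obtain ⟨c, hc, hlt⟩ := hst
      rcases List.mem_cons.1 hc with rfl | hc'
      · calc g y ≤ g (src lab b) := revwalk_le htail hgt
          _ = g (dst lab c) := by rw [hstep]
          _ < g (src lab c) := hlt
          _ = g x := by rw [hx]
      · calc g y < g (src lab b) := ih htail hgt ⟨c, hc', hlt⟩
          _ = g (dst lab a) := by rw [hstep]
          _ ≤ g (src lab a) := hg a (by simp)
          _ = g x := by rw [hx]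

/-- A plain walk is a reversed walk for the all-`⊕` labeling. -/
lemma isWalk_revwalk {A : Finset (V × V)} {l : List (V × V)} {x y : V}
    (h : IsWalk A l x y) : IsRevWalk A (fun _ => true) l x y := by
  obtain ⟨h1, h2, h3, h4, h5⟩ := h
  exact ⟨h1, h2, by simpa [dst, src] using h3, by simpa [src] using h4,
    by simpa [dst] using h5⟩

/-- In an acyclic digraph, walks have no repeated arcs. -/
lemma walk_nodup {S : Finset (V × V)} {l : List (V × V)} {x y : V}
    (hS : Acyclic S) (h : IsWalk S l x y) : l.Nodup := by
  by_contra hn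
  obtain ⟨a, ha⟩ := List.exists_duplicate_iff_not_nodup.2 hn
  obtain ⟨l1, l2, l3, rfl⟩ := aux_pair_sublist (List.duplicate_iff_sublist.1 ha)
  obtain ⟨-, hmem, hch, -, -⟩ := h
  apply hS (a :: l2) a.1
  have hinf : List.IsInfix ((a :: l2) ++ [a]) (l1 ++ a :: (l2 ++ a :: l3)) :=
    ⟨l1, l3, by simp⟩
  have hch2 : ((a :: l2) ++ [a]).Chain' (fun p q => p.2 = q.1) := hch.infix hinf
  simp only [List.Chain', List.isChain_append] at hch2
  obtain ⟨hchm, -, hjun⟩ := hch2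
  have hlast : ∀ z ∈ (a :: l2).getLast?, z.2 = a.1 := by
    intro z hz
    exact hjun z hz a (by simp)
  refine ⟨by simp, ?_, hchm, by simp, ?_⟩
  · intro p hp
    apply hmem
    simp only [List.mem_append, List.mem_cons] at hp ⊢
    tauto
  · have hne : (a :: l2) ≠ [] := by simp
    rw [List.getLast?_eq_getLast hne]
    simp only [Option.map_some, Option.some.injEq]
    exact hlast _ (by rw [List.getLast?_eq_getLast hne]; simp)

/-- Walks in an acyclic digraph have length at most the number of arcs. -/
lemma walk_length_le [DecidableEq V] {S : Finset (V × V)} {l : List (V × V)} {x y : V}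
    (hS : Acyclic S) (h : IsWalk S l x y) : l.length ≤ S.card := by
  have hn := walk_nodup hS h
  calc l.length = l.toFinset.card := (List.toFinset_card_of_nodup hn).symm
    _ ≤ S.card := Finset.card_le_card fun a ha => h.2.1 a (List.mem_toFinset.1 ha)

open Classical in
/-- Length of the longest walk ending at `v`. -/
noncomputable def rank (S : Finset (V × V)) (v : V) : ℕ :=
  Nat.findGreatest (fun n => ∃ l x, IsWalk S l x v ∧ l.length = n) S.card

lemma rank_lt [DecidableEq V] {S : Finset (V × V)} (hS : Acyclic S) {x y : V}
    (hxy : (x, y) ∈ S) : rank S x < rank S y := by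
  classical
  have key : ∃ l x', IsWalk S l x' y ∧ l.length = rank S x + 1 := by
    rcases Nat.eq_zero_or_pos (rank S x) with h0 | hpos
    · refine ⟨[(x, y)], x, ⟨by simp, by simpa using hxy, List.isChain_singleton _, by simp, by simp⟩, by simp [h0]⟩
    · have hspec : ∃ l x', IsWalk S l x' x ∧ l.length = rank S x := by
        rw [rank] at hpos ⊢
        exact (Nat.findGreatest_eq_iff.1 rfl).2.1 hpos.ne'
      obtain ⟨l, x', hw, hlen⟩ := hspec
      obtain ⟨hne, hmem, hch, hhd, hlst⟩ := hw
      refine ⟨l ++ [(x, y)], x', ⟨by simp, ?_, ?_, ?_, by simp⟩, by simp [hlen]⟩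
      · intro c hc
        rcases List.mem_append.1 hc with hc | hc
        · exact hmem c hc
        · rw [List.mem_singleton] at hc; subst hc; exact hxy
      · simp only [List.Chain', List.isChain_append]
        refine ⟨hch, by simp, ?_⟩
        intro p hp q hq
        rw [List.head?_cons, Option.mem_def, Option.some.injEq] at hq
        subst hq
        have : l.getLast?.map Prod.snd = some x := hlst
        rw [Option.mem_def] at hp
        rw [hp] at this
        simpa using this
      · cases l with
        | nil => exact absurd rfl hne
        | cons c t => simpa using hhd
  obtain ⟨l, x', hw, hlen⟩ := key
  have hb : rank S x + 1 ≤ S.card := hlen ▸ walk_length_le hS hw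
  have : rank S x + 1 ≤ rank S y := by
    rw [rank]
    exact Nat.le_findGreatest hb ⟨l, x', hw, hlen⟩
  omega

/-- The labeling induced by `rank (A \ F)` is valid. -/
lemma valid_rank [DecidableEq V] (A F : Finset (V × V)) :
    Valid A (fun a => decide (a ∈ A ∧ rank (A \ F) a.2 ≤ rank (A \ F) a.1)) := by
  set S := A \ F with hSdef
  set lab : V × V → Bool := fun a => decide (a ∈ A ∧ rank S a.2 ≤ rank S a.1) with hlab
  rintro l ⟨x, hw⟩ ⟨a, ha, hfa⟩
  have hmem := hw.2.1
  have hweak : ∀ b ∈ l, rank S (dst lab b) ≤ rank S (src lab b) := by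
    intro b hb
    by_cases hle : rank S b.2 ≤ rank S b.1
    · have : lab b = true := by simp [hlab, hmem b hb, hle]
      simpa [dst, src, this] using hle
    · have : lab b = false := by simp [hlab, hle]
      simp only [dst, src, this, Bool.false_eq_true, if_false]
      omega
  have hstrict : rank S (dst lab a) < rank S (src lab a) := by
    have hna : ¬ (a ∈ A ∧ rank S a.2 ≤ rank S a.1) := by
      simpa [hlab] using hfa
    have hlt : rank S a.1 < rank S a.2 := by
      rcases not_and_or.1 hna with h | h
      · exact absurd (hmem a ha) h
      · omega
    simp only [dst, src, hfa, Bool.false_eq_true, if_false]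
    exact hlt
  exact absurd (revwalk_lt hw hweak ⟨a, ha, hstrict⟩) (lt_irrefl _)

/-- Any valid labeling yields a feedback arc set (its set of `⊕`-arcs). -/
lemma valid_isFAS [DecidableEq V] {A : Finset (V × V)} {lab : V × V → Bool}
    (h : Valid A lab) : IsFAS A (A.filter (fun a => lab a = true)) := by
  refine ⟨Finset.filter_subset _ _, ?_⟩
  intro l x hw
  have hneg : ∀ a ∈ l, lab a = false := by
    intro a ha
    have := hw.2.1 a ha
    rw [Finset.mem_sdiff, Finset.mem_filter] at this
    rcases Bool.eq_false_or_eq_true (lab a) with hb | hb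
    · exact absurd ⟨this.1, hb⟩ this.2
    · exact hb
  have hmemA : ∀ a ∈ l, a ∈ A := fun a ha => (Finset.mem_sdiff.1 (hw.2.1 a ha)).1
  obtain ⟨hne, -, hch, hhd, hlst⟩ := hw
  have hrev : IsRevWalk A lab l.reverse x x := by
    refine ⟨by simpa using hne, fun a ha => hmemA a (List.mem_reverse.1 ha), ?_, ?_, ?_⟩
    · simp only [List.Chain', List.isChain_reverse]
      refine aux_chain'_mem_imp hch ?_
      intro p hp q hq hr
      show dst lab q = src lab p
      rw [dst, src, hneg p hp, hneg q hq]
      simp [hr.symm]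
    · rw [List.head?_reverse]
      obtain ⟨z, hz, hz2⟩ := Option.map_eq_some_iff.1 hlst
      rw [hz]
      have : lab z = false := hneg z (List.mem_of_mem_getLast? (by rw [hz]; rfl))
      simp [src, this, hz2]
    · rw [List.getLast?_reverse]
      obtain ⟨z, hz, hz2⟩ := Option.map_eq_some_iff.1 hhd
      rw [hz]
      have : lab z = false := hneg z (List.mem_of_mem_head? hz)
      simp [dst, this, hz2]
  obtain ⟨z, hz, -⟩ := Option.map_eq_some_iff.1 hhd
  exact h l.reverse ⟨x, hrev⟩
    ⟨z, List.mem_reverse.2 (List.mem_of_mem_head? hz), hneg z (List.mem_of_mem_head? hz)⟩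

/-- From any FAS `F` one can build a valid labeling whose `⊕`-set is a FAS contained in `F`. -/
lemma exists_good_lab [DecidableEq V] {A F : Finset (V × V)} (hF : IsFAS A F) :
    ∃ lab : V × V → Bool, Valid A lab ∧ (∀ a, a ∉ A → lab a = false) ∧
      A.filter (fun a => lab a = true) ⊆ F ∧
      IsFAS A (A.filter (fun a => lab a = true)) := by
  classical
  set S := A \ F with hSdef
  have hAc : Acyclic S := hF.2
  refine ⟨fun a => decide (a ∈ A ∧ rank S a.2 ≤ rank S a.1), valid_rank A F,
    fun a ha => by simp [ha], ?_, ?_⟩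
  · intro a ha
    rw [Finset.mem_filter, decide_eq_true_eq] at ha
    obtain ⟨haA, -, hle⟩ := ha
    by_contra haF
    have haS : (a.1, a.2) ∈ S := by
      rw [hSdef, Finset.mem_sdiff]
      simpa using ⟨haA, haF⟩
    have := rank_lt hAc haS
    omega
  · refine ⟨Finset.filter_subset _ _, ?_⟩
    intro l x hw
    have hstrict : ∀ a ∈ l, rank S a.1 < rank S a.2 := by
      intro a ha
      have hm := hw.2.1 a ha
      rw [Finset.mem_sdiff, Finset.mem_filter, decide_eq_true_eq] at hm
      have := hm.2
      push_neg at this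
      exact this hm.1 hm.1
    have hw' : IsWalk A l x x :=
      ⟨hw.1, fun a ha => (Finset.mem_sdiff.1 (hw.2.1 a ha)).1, hw.2.2⟩
    have hrev := isWalk_revwalk hw'
    have hlt := revwalk_lt (g := fun v => OrderDual.toDual (rank S v)) hrev
      (fun a ha => by
        simp only [dst, src, if_pos rfl, OrderDual.toDual_le_toDual]
        exact (hstrict a ha).le)
      ⟨l.head (hw.1), List.head_mem _, by
        simp only [dst, src, if_pos rfl, OrderDual.toDual_lt_toDual]
        exact hstrict _ (List.head_mem _)⟩
    exact absurd hlt (lt_irrefl _)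

/-- `lab ↦ F_lab` is a bijection between minimal valid labelings and minimal feedback arc
sets. -/
theorem statement5 {V : Type*} [DecidableEq V] (A : Finset (V × V)) :
    Set.BijOn (fun lab : V × V → Bool => A.filter (fun a => lab a = true))
      {lab | MinValidLab A lab} {F | IsMinFAS A F} := by
  classical
  refine ⟨?_, ?_, ?_⟩
  · -- MapsTo
    rintro lab ⟨hv, hout, hmin⟩
    refine ⟨valid_isFAS hv, ?_⟩
    rintro F' hss hF'
    obtain ⟨lab0, hv0, hout0, hsub0, hfas0⟩ := exists_good_lab hF'
    have heq := hmin lab0 hv0 (hsub0.trans hss.subset)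
    have hcon : A.filter (fun a => lab a = true) ⊆ F' := heq ▸ hsub0
    exact hss.not_subset hcon
  · -- InjOn
    rintro lab1 ⟨hv1, hout1, -⟩ lab2 ⟨hv2, hout2, -⟩ heq
    funext a
    by_cases ha : a ∈ A
    · have h1 := Finset.ext_iff.1 heq a
      simp only [Finset.mem_filter, ha, true_and] at h1
      cases hb1 : lab1 a <;> cases hb2 : lab2 a <;> simp_all
    · rw [hout1 a ha, hout2 a ha]
  · -- SurjOn
    rintro F ⟨hfas, hmin⟩
    obtain ⟨lab0, hv0, hout0, hsub0, hfas0⟩ := exists_good_lab hfas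
    have hEq : A.filter (fun a => lab0 a = true) = F := by
      by_contra hne
      exact hmin _ (Finset.ssubset_iff_subset_ne.2 ⟨hsub0, hne⟩) hfas0
    refine ⟨lab0, ⟨hv0, hout0, ?_⟩, hEq⟩
    intro lab' hv' hsub'
    by_contra hne
    have hsubF : A.filter (fun a => lab' a = true) ⊆ F := hEq ▸ hsub'
    exact hmin _ (Finset.ssubset_iff_subset_ne.2 ⟨hsubF, fun h => hne (h.trans hEq.symm)⟩)
      (valid_isFAS hv')


end UD
end

section
/- If G is a directed cycle on m ≥ 1 arcs, then a labeling lab : A → {⊕,⊖} is valid if and only if it is not the all-⊖ labeling; hence #UD(G) = 2^m − 1. -/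
namespace UD

variable {V : Type*}

/-- Arc set of the directed cycle on `Fin m`. -/
def cycArcs (m : ℕ) [NeZero m] : Finset (Fin m × Fin m) :=
  Finset.univ.image (fun i : Fin m => (i, i + 1))

open Fin.NatCast Fin.CommRing

theorem chain'_iff_get' {α : Type*} {R : α → α → Prop} {l : List α} :
    l.Chain' R ↔ ∀ (i : ℕ) (h : i < l.length - 1),
      R (l.get ⟨i, by omega⟩) (l.get ⟨i + 1, by omega⟩) := by
  show l.IsChain R ↔ _
  rw [List.isChain_iff_getElem]
  constructor
  · intro h i hi; exact h i (by omega)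
  · intro h i hi; exact h i (by omega)

lemma mem_cycArcs {m : ℕ} [NeZero m] {a : Fin m × Fin m} :
    a ∈ cycArcs m ↔ a.2 = a.1 + 1 := by
  simp only [cycArcs, Finset.mem_image, Finset.mem_univ, true_and]
  constructor
  · rintro ⟨i, rfl⟩; rfl
  · intro h; exact ⟨a.1, Prod.ext rfl h.symm⟩

lemma step_eq {m : ℕ} [NeZero m] (lab : Fin m × Fin m → Bool) {a b : Fin m × Fin m}
    (ha : a ∈ cycArcs m) (hb : b ∈ cycArcs m) (h : dst lab a = src lab b) :
    lab a = lab b := by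
  rw [mem_cycArcs] at ha hb
  cases hla : lab a <;> cases hlb : lab b <;> try rfl
  · exfalso
    simp only [dst, src, hla, hlb, if_true, if_false, Bool.false_eq_true] at h
    have hab : a = b := Prod.ext h (by rw [ha, hb, h])
    rw [hab, hlb] at hla; exact absurd hla (by simp)
  · exfalso
    simp only [dst, src, hla, hlb, if_true, if_false, Bool.false_eq_true] at h
    have h1 : a.1 = b.1 := by rw [ha, hb] at h; exact add_right_cancel h
    have hab : a = b := Prod.ext h1 h
    rw [hab, hlb] at hla; exact absurd hla (by simp)

lemma chain_label_eq {m : ℕ} [NeZero m] (lab : Fin m × Fin m → Bool) :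
    ∀ (a : Fin m × Fin m) (l : List (Fin m × Fin m)),
      (∀ x ∈ a :: l, x ∈ cycArcs m) →
      (a :: l).Chain' (fun p q => dst lab p = src lab q) →
      ∀ x ∈ a :: l, lab x = lab a := by
  intro a l
  induction l generalizing a with
  | nil =>
    intro _ _ x hx
    rw [List.mem_singleton] at hx; rw [hx]
  | cons b t ih =>
    intro hA hc x hx
    have hc' := List.isChain_cons_cons.mp hc
    have hab : lab a = lab b :=
      step_eq lab (hA a (by simp)) (hA b (by simp)) hc'.1
    rcases List.mem_cons.mp hx with h | h
    · rw [h]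
    · rw [ih b (fun y hy => hA y (List.mem_cons_of_mem a hy)) hc'.2 x h, hab]

lemma valid_iff {m : ℕ} [NeZero m] (lab : Fin m × Fin m → Bool) :
    Valid (cycArcs m) lab ↔ ∃ a ∈ cycArcs m, lab a = true := by
  constructor
  · intro hv
    by_contra hno
    push_neg at hno
    have hall : ∀ a ∈ cycArcs m, lab a = false := by
      intro a ha
      cases h : lab a with
      | false => rfl
      | true => exact absurd h (hno a ha)
    obtain ⟨n, rfl⟩ : ∃ n, m = n + 1 :=
      ⟨m - 1, (Nat.succ_pred_eq_of_pos (Nat.pos_of_ne_zero (NeZero.ne m))).symm⟩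
    set f : ℕ → Fin (n + 1) × Fin (n + 1) :=
      fun k => ((-(k : Fin (n + 1)) - 1), -(k : Fin (n + 1))) with hf
    have hfA : ∀ k, f k ∈ cycArcs (n + 1) := by
      intro k; rw [mem_cycArcs]; simp [hf]
    set L : List (Fin (n + 1) × Fin (n + 1)) := (List.range (n + 1)).map f with hL
    have hlen : L.length = n + 1 := by simp [hL]
    have hLne : L ≠ [] := by
      intro h; rw [h] at hlen; simp at hlen
    have hLmem : ∀ a ∈ L, a ∈ cycArcs (n + 1) := by
      intro a ha
      obtain ⟨k, _, rfl⟩ := List.mem_map.mp ha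
      exact hfA k
    have hLget : ∀ (i : ℕ) (h : i < L.length), L.get ⟨i, h⟩ = f i := by
      intro i h
      simp [hL, List.get_eq_getElem]
    have hLchain : L.Chain' (fun p q => dst lab p = src lab q) := by
      rw [chain'_iff_get']
      intro i hi
      rw [hLget i (by omega), hLget (i + 1) (by omega)]
      have h1 : lab (f i) = false := hall _ (hfA i)
      have h2 : lab (f (i + 1)) = false := hall _ (hfA (i + 1))
      simp only [dst, src, h1, h2, if_false, Bool.false_eq_true]; simp only [hf]
      push_cast
      ring
    have hhead : L.head? = some (f 0) := by
      rw [hL, List.range_succ_eq_map]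
      rfl
    have hlast : L.getLast? = some (f n) := by
      rw [hL, List.range_succ, List.map_append]
      exact List.getLast?_concat
    have hwalk : IsRevWalk (cycArcs (n + 1)) lab L 0 0 := by
      refine ⟨hLne, hLmem, hLchain, ?_, ?_⟩
      · rw [hhead]
        simp only [Option.map_some, Option.some_inj]
        have hf0 : lab (f 0) = false := hall _ (hfA 0)
        simp only [src, hf0, Bool.false_eq_true, if_false]; simp only [hf]
        simp
      · rw [hlast]
        simp only [Option.map_some, Option.some_inj]
        have hfn : lab (f n) = false := hall _ (hfA n)
        simp only [dst, hfn, if_false, Bool.false_eq_true]; simp only [hf]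
        have h0 : ((n : Fin (n + 1)) + 1) = 0 := by
          rw [← Nat.cast_succ, Fin.natCast_self]
        linear_combination -h0
    have hf0L : f 0 ∈ L := by
      rw [hL]; exact List.mem_map_of_mem (List.mem_range.mpr (Nat.succ_pos n))
    exact hv L ⟨0, hwalk⟩ ⟨f 0, hf0L, hall _ (hfA 0)⟩
  · rintro ⟨a0, ha0, ht⟩ l ⟨x, hne, hmem, hchain, hhead, hlast⟩ hneg
    obtain ⟨c, hc, hcf⟩ := hneg
    obtain ⟨a, t, rfl⟩ := List.exists_cons_of_ne_nil hne
    have hconst := chain_label_eq lab a t hmem hchain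
    have hafalse : lab a = false := by rw [← hconst c hc]; exact hcf
    have hall : ∀ p ∈ a :: t, lab p = false := fun p hp => (hconst p hp).trans hafalse
    have hx1 : a.1 = x - 1 := by
      have ha2 : a.2 = x := by
        simpa [src, hafalse] using hhead
      have haA := mem_cycArcs.mp (hmem a (by simp))
      rw [haA] at ha2
      exact eq_sub_of_add_eq ha2
    have hpos : ∀ (k : ℕ) (h : k < (a :: t).length),
        ((a :: t).get ⟨k, h⟩).1 = x - 1 - (k : Fin m) := by
      intro k
      induction k with
      | zero => intro h; simpa using hx1
      | succ k ih =>
        intro h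
        have h1 : k < (a :: t).length := by omega
        have hk : k < (a :: t).length - 1 := by
          simp only [List.length_cons] at h ⊢; omega
        have hR := chain'_iff_get'.mp hchain k hk
        have hgk : lab ((a :: t).get ⟨k, h1⟩) = false := hall _ (List.get_mem _ _)
        have hgk1 : lab ((a :: t).get ⟨k + 1, h⟩) = false := hall _ (List.get_mem _ _)
        simp only [dst, src, hgk, hgk1, if_false, Bool.false_eq_true] at hR
        have hA1 := mem_cycArcs.mp (hmem _ (List.get_mem (a :: t) ⟨k + 1, h⟩))
        have hstep : ((a :: t).get ⟨k + 1, h⟩).1 = ((a :: t).get ⟨k, h1⟩).1 - 1 := by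
          rw [hA1] at hR
          have := hR.symm
          exact eq_sub_of_add_eq this
        rw [hstep, ih h1]
        push_cast
        ring
    have hlastval : ((a :: t).get ⟨(a :: t).length - 1, by simp⟩).1 = x := by
      rw [List.getLast?_eq_getLast hne] at hlast
      simp only [Option.map_some, Option.some.injEq] at hlast
      have hgl : lab ((a :: t).getLast hne) = false := hall _ (List.getLast_mem hne)
      rw [dst, hgl] at hlast
      simp only [Bool.false_eq_true, if_false] at hlast
      rw [List.getLast_eq_getElem] at hlast
      simpa [List.get_eq_getElem] using hlast
    set len := (a :: t).length with hlen
    have hlenpos : 0 < len := by simp [hlen]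
    have hcast : ((len : ℕ) : Fin m) = 0 := by
      have := hpos (len - 1) (by omega)
      rw [hlastval] at this
      have h2 : ((len - 1 : ℕ) : Fin m) = -1 := by
        have h3 : x - 1 - ((len - 1 : ℕ) : Fin m) - x = 0 := by rw [← this]; ring
        have h4 : -1 - ((len - 1 : ℕ) : Fin m) = 0 := by linear_combination h3
        linear_combination -h4
      have h5 : len - 1 + 1 = len := by omega
      calc ((len : ℕ) : Fin m) = (((len - 1) + 1 : ℕ) : Fin m) := by rw [h5]
        _ = ((len - 1 : ℕ) : Fin m) + 1 := by push_cast; ring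
        _ = -1 + 1 := by rw [h2]
        _ = 0 := by ring
    have hdvd : m ∣ len := Fin.natCast_eq_zero.mp hcast
    have hmle : m ≤ len := Nat.le_of_dvd hlenpos hdvd
    set k0 := ((x - 1 - a0.1 : Fin m)).val with hk0def
    have hk0 : k0 < len := lt_of_lt_of_le (Fin.is_lt _) hmle
    have hg1 : ((a :: t).get ⟨k0, hk0⟩).1 = a0.1 := by
      rw [hpos k0 hk0, hk0def, Fin.cast_val_eq_self]
      ring
    have hgA := mem_cycArcs.mp (hmem _ (List.get_mem (a :: t) ⟨k0, hk0⟩))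
    have hga0 : (a :: t).get ⟨k0, hk0⟩ = a0 :=
      Prod.ext hg1 (by rw [hgA, hg1, ← mem_cycArcs.mp ha0])
    have hfalse : lab ((a :: t).get ⟨k0, hk0⟩) = false := hall _ (List.get_mem _ _)
    rw [hga0, ht] at hfalse
    exact absurd hfalse (by simp)

/-- On a directed cycle, a labeling is valid iff it is not all-`⊖`, so `#UD = 2 ^ m - 1`. -/
theorem statement11 (m : ℕ) [NeZero m] :
    (∀ lab : Fin m × Fin m → Bool,
      Valid (cycArcs m) lab ↔ ∃ a ∈ cycArcs m, lab a = true) ∧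
    numUD (cycArcs m) = 2 ^ m - 1 := by
  refine ⟨fun lab => valid_iff lab, ?_⟩
  classical
  have hcard : (cycArcs m).card = m := by
    rw [cycArcs, Finset.card_image_of_injective _ (fun i j h => by
      simpa using congrArg Prod.fst h)]
    simp
  have hval : ∀ lab : cycArcs m → Bool,
      ValidOn (cycArcs m) lab ↔ ¬ (∀ a : cycArcs m, lab a = false) := by
    intro lab
    rw [ValidOn, valid_iff]
    constructor
    · rintro ⟨a, ha, hl⟩ hallf
      rw [ext, dif_pos ha, hallf ⟨a, ha⟩] at hl
      exact absurd hl (by simp)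
    · intro h
      push_neg at h
      obtain ⟨a, ha⟩ := h
      refine ⟨a.1, a.2, ?_⟩
      rw [ext, dif_pos a.2]
      cases hx : lab a with
      | false => exact absurd hx ha
      | true => rw [← hx]
  rw [numUD, Nat.card_congr (Equiv.subtypeEquivRight hval), Nat.card_eq_fintype_card,
    Fintype.card_subtype_compl]
  have h1 : Fintype.card {lab : cycArcs m → Bool // ∀ a, lab a = false} = 1 := by
    rw [Fintype.card_eq_one_iff]
    exact ⟨⟨fun _ => false, fun _ => rfl⟩, fun g => Subtype.ext (funext g.2)⟩
  rw [h1, Fintype.card_fun]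
  simp [hcard]

end UD
end

section
/- Let G be a digraph whose underlying undirected graph is a cycle with m arcs, but which is not a directed cycle in either direction. Then exactly two labelings of G are invalid, so #UD(G) = 2^m − 2. -/
namespace UD

variable {V : Type*}

/-- Arc `i` of the oriented cycle joins `i` and `i + 1`; it is directed `i → i + 1` when
`d i = true` and `i + 1 → i` otherwise. `esrc`/`edst` are its endpoints after reversing the
`⊖`-labeled (`false`) arcs. -/
def esrc {m : ℕ} [NeZero m] (d lab : Fin m → Bool) (i : Fin m) : Fin m :=
  if d i = lab i then i else i + 1

def edst {m : ℕ} [NeZero m] (d lab : Fin m → Bool) (i : Fin m) : Fin m :=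
  if d i = lab i then i + 1 else i

/-- Validity for the oriented cycle with direction map `d`: no closed walk of the reversed
multidigraph uses a `⊖`-arc. -/
def CycValid {m : ℕ} [NeZero m] (d lab : Fin m → Bool) : Prop :=
  ∀ l : List (Fin m), l ≠ [] →
    l.Chain' (fun i j => edst d lab i = esrc d lab j) →
    l.getLast?.map (edst d lab) = l.head?.map (esrc d lab) →
    ¬ ∃ i ∈ l, lab i = false

open scoped Fin.NatCast Fin.CommRing

section CycleAux
variable {m : ℕ} [NeZero m]

/-- The ±1 step of arc `i` in the reversed orientation. -/
private def ostep (d lab : Fin m → Bool) (i : Fin m) : ℤ :=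
  if d i = lab i then 1 else -1

/-- Partial sums of steps starting after the sink `t`. -/
private def psum (d lab : Fin m → Bool) (t : Fin m) (j : ℕ) : ℤ :=
  ∑ i ∈ Finset.Ico 1 j, ostep d lab (t + (i : Fin m))

/-- Potential function: strictly increasing along every arc when `t` is a sink. -/
private def pot (d lab : Fin m → Bool) (t : Fin m) (v : Fin m) : ℤ :=
  if v = t then (m : ℤ) else psum d lab t ((v - t).val)

private lemma chain_mono (d lab : Fin m → Bool) (φ : Fin m → ℤ)
    (h : ∀ i, φ (esrc d lab i) < φ (edst d lab i)) :
    ∀ (l : List (Fin m)) (x : Fin m),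
      (x :: l).Chain' (fun i j => edst d lab i = esrc d lab j) →
      φ (esrc d lab x) < φ (edst d lab ((x :: l).getLast (List.cons_ne_nil _ _))) := by
  intro l
  induction l with
  | nil => intro x _; simpa [List.getLast] using h x
  | cons b l ih =>
    intro x hc
    replace hc := List.isChain_cons_cons.mp hc
    have h1 := ih b hc.2
    have hgl : (x :: b :: l).getLast (List.cons_ne_nil _ _)
        = (b :: l).getLast (List.cons_ne_nil _ _) := by
      simp [List.getLast]
    rw [hgl]
    calc φ (esrc d lab x) < φ (edst d lab x) := h x
      _ = φ (esrc d lab b) := by rw [hc.1]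
      _ < _ := h1

private lemma cycValid_of_mono (d lab : Fin m → Bool) (φ : Fin m → ℤ)
    (h : ∀ i, φ (esrc d lab i) < φ (edst d lab i)) : CycValid d lab := by
  intro l hne hchain hclose _
  obtain ⟨x, l', rfl⟩ := List.exists_cons_of_ne_nil hne
  have hlt := chain_mono d lab φ h l' x hchain
  rw [List.getLast?_eq_getLast hne, List.head?_eq_head hne] at hclose
  simp only [Option.map_some, Option.some.injEq, List.head_cons] at hclose
  rw [hclose] at hlt
  exact lt_irrefl _ hlt

private lemma exists_sink (d lab : Fin m → Bool) (i j : Fin m)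
    (hi : d i = lab i) (hj : d j ≠ lab j) :
    ∃ t : Fin m, d (t - 1) = lab (t - 1) ∧ d t ≠ lab t := by
  classical
  have hP : ∃ k : ℕ, 0 < k ∧ d (i + (k : Fin m)) ≠ lab (i + (k : Fin m)) := by
    refine ⟨(j - i).val, ?_, ?_⟩
    · rcases Nat.eq_zero_or_pos (j - i).val with h | h
      · exfalso
        have : j - i = 0 := Fin.ext (by simpa using h)
        rw [sub_eq_zero] at this; subst this; exact hj hi
      · exact h
    · rw [Fin.cast_val_eq_self]
      simpa [add_sub_cancel] using hj
  set k0 := Nat.find hP with hk0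
  obtain ⟨hk0pos, hk0spec⟩ := Nat.find_spec hP
  refine ⟨i + (k0 : Fin m), ?_, hk0spec⟩
  have hcast : (k0 : Fin m) = ((k0 - 1 : ℕ) : Fin m) + 1 := by
    conv_lhs => rw [show k0 = (k0 - 1) + 1 by omega]
    push_cast
    ring
  have ht1 : i + (k0 : Fin m) - 1 = i + ((k0 - 1 : ℕ) : Fin m) := by
    rw [hcast]; ring
  rw [ht1]
  rcases Nat.eq_zero_or_pos (k0 - 1) with h | h
  · rw [h]; simpa using hi
  · have hlt : k0 - 1 < k0 := by omega
    have := Nat.find_min hP hlt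
    push_neg at this
    exact this h

private lemma valid_of_mixed (hm : 2 ≤ m) (d lab : Fin m → Bool) (t : Fin m)
    (h1 : d (t - 1) = lab (t - 1)) (h0 : d t ≠ lab t) : CycValid d lab := by
  apply cycValid_of_mono d lab (pot d lab t)
  intro a
  have hpott : pot d lab t t = (m : ℤ) := if_pos rfl
  have h1m : (1 : Fin m).val = 1 := by
    rw [Fin.val_one']; exact Nat.mod_eq_of_lt hm
  by_cases hat : a = t
  · subst hat
    simp only [esrc, edst, if_neg h0]
    have hne : a + 1 ≠ a := by
      intro h
      have : (1 : Fin m) = 0 := by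
        have := congrArg (· - a) h
        simpa [add_sub_cancel_left, sub_self] using this
      rw [Fin.ext_iff, h1m] at this
      simp at this
    have hval : (a + 1 - a).val = 1 := by
      rw [add_sub_cancel_left, h1m]
    rw [hpott, pot, if_neg hne, hval]
    have : psum d lab a 1 = 0 := by simp [psum]
    rw [this]
    exact_mod_cast Nat.pos_of_ne_zero (NeZero.ne m)
  · set k := (a - t).val with hkdef
    have hk0 : k ≠ 0 := by
      intro h
      exact hat (by rw [← sub_eq_zero]; exact Fin.ext (by simpa [hkdef] using h))
    have hkm : k < m := (a - t).isLt
    have hpota : pot d lab t a = psum d lab t k := if_neg hat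
    by_cases hk : k = m - 1
    · -- a is the "last" vertex: a + 1 = t, arc is forward (into the sink)
      have hsub : a + 1 - t = (a - t) + 1 := by ring
      have hval0 : (a + 1 - t).val = 0 := by
        rw [hsub, Fin.val_add, h1m, ← hkdef, hk,
          Nat.sub_add_cancel (by omega), Nat.mod_self]
      have hat1 : a + 1 = t := by
        rw [← sub_eq_zero]
        exact Fin.ext (by simpa using hval0)
      have hta : a = t - 1 := by rw [← hat1]; ring
      have hda : d a = lab a := by rw [hta]; exact h1
      simp only [esrc, edst, if_pos hda]
      rw [hat1, hpott, hpota]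
      have habs : |psum d lab t k| ≤ ((m - 1 - 1 : ℕ) : ℤ) := by
        calc |psum d lab t k| ≤ ∑ i ∈ Finset.Ico 1 k, |ostep d lab (t + (i : Fin m))| :=
              Finset.abs_sum_le_sum_abs _ _
          _ ≤ ∑ _i ∈ Finset.Ico 1 k, 1 := by
              refine Finset.sum_le_sum fun i _ => ?_
              unfold ostep; split <;> simp
          _ = ((k - 1 : ℕ) : ℤ) := by simp [Nat.card_Ico]
          _ = ((m - 1 - 1 : ℕ) : ℤ) := by rw [hk]
      have hc : ((m - 1 - 1 : ℕ) : ℤ) < (m : ℤ) := by omega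
      have := (abs_le.mp habs).2
      linarith
    · -- interior arc
      have hk1 : k + 1 < m := by omega
      have hkpos : 1 ≤ k := Nat.one_le_iff_ne_zero.mpr hk0
      have hsub : a + 1 - t = (a - t) + 1 := by ring
      have hval : (a + 1 - t).val = k + 1 := by
        rw [hsub, Fin.val_add, h1m, ← hkdef]
        exact Nat.mod_eq_of_lt hk1
      have ha1t : a + 1 ≠ t := by
        intro h
        rw [← sub_eq_zero] at h
        rw [h] at hval
        simp at hval
      have hpota1 : pot d lab t (a + 1) = psum d lab t (k + 1) := by
        rw [pot, if_neg ha1t, hval]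
      have hta : t + ((k : ℕ) : Fin m) = a := by
        rw [hkdef, Fin.cast_val_eq_self, add_sub_cancel]
      have hstep : psum d lab t (k + 1) = psum d lab t k + ostep d lab a := by
        rw [psum, Finset.sum_Ico_succ_top hkpos, hta]; rfl
      by_cases hd : d a = lab a
      · simp only [esrc, edst, if_pos hd]
        rw [hpota, hpota1, hstep, ostep, if_pos hd]
        linarith
      · simp only [esrc, edst, if_neg hd]
        rw [hpota, hpota1, hstep, ostep, if_neg hd]
        linarith

end CycleAux

section CycleAux2
variable {m : ℕ} [NeZero m]

private lemma fin_mk_add_one (hm : 2 ≤ m) {i : ℕ} (h2 : i < m) (h : i + 1 < m) :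
    (⟨i, h2⟩ : Fin m) + 1 = ⟨i + 1, h⟩ := by
  apply Fin.ext
  rw [Fin.val_add, Fin.val_one', Nat.mod_eq_of_lt hm]
  exact Nat.mod_eq_of_lt h

private lemma fin_mk_last_add_one (hm : 2 ≤ m) (h2 : m - 1 < m) (h0 : 0 < m) :
    (⟨m - 1, h2⟩ : Fin m) + 1 = ⟨0, h0⟩ := by
  apply Fin.ext
  rw [Fin.val_add, Fin.val_one', Nat.mod_eq_of_lt hm]
  show (m - 1 + 1) % m = 0
  rw [Nat.sub_add_cancel (by omega), Nat.mod_self]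

private lemma not_valid_fwd (hm : 2 ≤ m) (d : Fin m → Bool) (hd2 : ∃ i, d i = false) :
    ¬ CycValid d d := by
  intro hv
  obtain ⟨j, hj⟩ := hd2
  have hlen : (List.finRange m).length = m := List.length_finRange
  have hne : (List.finRange m) ≠ [] := by
    rw [Ne, List.finRange_eq_nil_iff]; omega
  refine hv (List.finRange m) hne ?_ ?_ ⟨j, List.mem_finRange j, hj⟩
  · refine List.isChain_iff_getElem.mpr ?_
    intro i hi
    rw [hlen] at hi
    rw [List.getElem_finRange, List.getElem_finRange]
    simp only [edst, esrc, if_pos rfl]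
    exact fin_mk_add_one hm (by omega) (by omega)
  · rw [List.getLast?_eq_getElem?, List.head?_eq_getElem?, hlen,
      List.getElem?_eq_getElem (by rw [hlen]; omega),
      List.getElem?_eq_getElem (by rw [hlen]; omega),
      List.getElem_finRange, List.getElem_finRange]
    simp only [Option.map_some, Option.some.injEq]
    have e1 : ∀ x : Fin m, edst d d x = x + 1 := fun x => if_pos rfl
    have e2 : ∀ x : Fin m, esrc d d x = x := fun x => if_pos rfl
    rw [e1, e2]
    apply Fin.ext
    rw [Fin.val_add, Fin.val_one', Nat.mod_eq_of_lt hm]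
    simp only [Fin.coe_cast]
    show (m - 1 + 1) % m = 0
    rw [Nat.sub_add_cancel (by omega), Nat.mod_self]

private lemma not_valid_bwd (hm : 2 ≤ m) (d : Fin m → Bool) (hd1 : ∃ i, d i = true) :
    ¬ CycValid d (fun i => !d i) := by
  intro hv
  obtain ⟨j, hj⟩ := hd1
  have hcond : ∀ i : Fin m, ¬ (d i = (fun i => !d i) i) := by
    intro i; simp
  have hlen : (List.finRange m).length = m := List.length_finRange
  have hne : (List.finRange m).reverse ≠ [] := by
    rw [Ne, List.reverse_eq_nil_iff, List.finRange_eq_nil_iff]; omega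
  refine hv (List.finRange m).reverse hne ?_ ?_
    ⟨j, List.mem_reverse.mpr (List.mem_finRange j), by simp [hj]⟩
  · refine List.isChain_reverse.mpr (List.isChain_iff_getElem.mpr ?_)
    intro i hi
    rw [hlen] at hi
    rw [List.getElem_finRange, List.getElem_finRange]
    show edst _ _ _ = esrc _ _ _
    simp only [edst, esrc, if_neg (hcond _)]
    exact (fin_mk_add_one hm (by omega) (by omega)).symm
  · rw [List.getLast?_reverse, List.head?_reverse,
      List.getLast?_eq_getElem?, List.head?_eq_getElem?, hlen,
      List.getElem?_eq_getElem (by rw [hlen]; omega),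
      List.getElem?_eq_getElem (by rw [hlen]; omega),
      List.getElem_finRange, List.getElem_finRange]
    simp only [Option.map_some, Option.some.injEq]
    have e1 : ∀ x : Fin m, edst d (fun i => !d i) x = x := fun x => if_neg (hcond x)
    have e2 : ∀ x : Fin m, esrc d (fun i => !d i) x = x + 1 := fun x => if_neg (hcond x)
    rw [e1, e2]
    apply Fin.ext
    rw [Fin.val_add, Fin.val_one', Nat.mod_eq_of_lt hm]
    simp only [Fin.coe_cast]
    show (0:ℕ) = (m - 1 + 1) % m
    rw [Nat.sub_add_cancel (by omega), Nat.mod_self]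

end CycleAux2

/-- An oriented cycle with `m` arcs which is not a directed cycle in either direction has
exactly `2 ^ m - 2` valid labelings. -/
theorem statement12 (m : ℕ) [NeZero m] (hm : 2 ≤ m) (d : Fin m → Bool)
    (hd1 : ∃ i, d i = true) (hd2 : ∃ i, d i = false) :
    Nat.card {lab : Fin m → Bool // CycValid d lab} = 2 ^ m - 2 := by
  classical
  have hiff : ∀ lab : Fin m → Bool, CycValid d lab ↔
      ¬ (lab = d ∨ lab = fun i => !d i) := by
    intro lab
    constructor
    · intro hv h
      rcases h with rfl | rfl
      · exact not_valid_fwd hm _ hd2 hv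
      · exact not_valid_bwd hm _ hd1 hv
    · intro h
      push_neg at h
      obtain ⟨h1, h2⟩ := h
      have he : ∃ i, d i = lab i := by
        by_contra hc; push_neg at hc
        refine h2 (funext fun i => ?_)
        have := hc i
        revert this; cases d i <;> cases lab i <;> simp
      have hnn : ∃ i, d i ≠ lab i := by
        by_contra hc; push_neg at hc
        exact h1 (funext fun i => (hc i).symm)
      obtain ⟨i, hi⟩ := he
      obtain ⟨j, hj⟩ := hnn
      obtain ⟨t, ht1, ht0⟩ := exists_sink d lab i j hi hj
      exact valid_of_mixed hm d lab t ht1 ht0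
  have e : {lab : Fin m → Bool // CycValid d lab} ≃
      {lab : Fin m → Bool // ¬ lab ∈ ({d, fun i => !d i} : Finset (Fin m → Bool))} :=
    Equiv.subtypeEquivRight fun lab => by
      rw [hiff lab, Finset.mem_insert, Finset.mem_singleton]
  have hcard : ({d, fun i => !d i} : Finset (Fin m → Bool)).card = 2 := by
    rw [Finset.card_insert_of_notMem, Finset.card_singleton]
    rw [Finset.mem_singleton]
    intro h
    have := congrFun h ⟨0, by omega⟩
    exact (Bool.not_ne_self (d ⟨0, by omega⟩)) this.symm
  rw [Nat.card_congr e, Nat.card_eq_fintype_card, Fintype.card_subtype_compl,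
    Fintype.card_fun, Fintype.card_coe, hcard]
  simp

end UD
end

section
/- Let (D,α,β') be the series composition of oss-graphs (G,α,β) and (G',α',β') on disjoint vertex sets, identifying β with α'. If lab ∈ UD_{α,β}^{+,∅}(G) and lab' ∈ UD_{α',β'}^{−,∅}(G'), then the union labeling lab ∪ lab' is a valid labeling of D belonging to UD_{α,β'}^{−,∅}(D). -/
namespace UD

variable {V : Type*}

/-- Map the vertices of `G'` into the series composition identifying `α' : V'` with `β : V`. -/
def smap {V V' : Type*} [DecidableEq V'] (β : V) (α' : V') : V' → V ⊕ V' :=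
  fun w => if w = α' then Sum.inl β else Sum.inr w

/-- Arc set of the series composition of `(G, α, β)` and `(G', α', β')`. -/
def seriesArcs {V V' : Type*} [DecidableEq V] [DecidableEq V'] (A : Finset (V × V))
    (A' : Finset (V' × V')) (β : V) (α' : V') : Finset ((V ⊕ V') × (V ⊕ V')) :=
  A.image (fun a => (Sum.inl a.1, Sum.inl a.2)) ∪
    A'.image (fun a => (smap β α' a.1, smap β α' a.2))

/-- The union labeling on the series composition. -/
def seriesLab {V V' : Type*} (α' : V') (lab : V × V → Bool) (lab' : V' × V' → Bool) :
    (V ⊕ V') × (V ⊕ V') → Bool := fun b =>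
  match b with
  | (Sum.inl x, Sum.inl y) => lab (x, y)
  | (Sum.inl _, Sum.inr w) => lab' (α', w)
  | (Sum.inr w, Sum.inl _) => lab' (w, α')
  | (Sum.inr w, Sum.inr w') => lab' (w, w')

section Series

set_option linter.unusedSectionVars false

variable {V V' : Type*} [DecidableEq V] [DecidableEq V']

/-- Embedding of `G`-arcs into the series composition. -/
def emb : V × V → (V ⊕ V') × (V ⊕ V') := fun a => (Sum.inl a.1, Sum.inl a.2)

/-- Embedding of `G'`-arcs into the series composition. -/
def emb' (β : V) (α' : V') : V' × V' → (V ⊕ V') × (V ⊕ V') :=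
  fun a => (smap β α' a.1, smap β α' a.2)

variable {A : Finset (V × V)} {A' : Finset (V' × V')} {β : V} {α' : V'}
  {lab : V × V → Bool} {lab' : V' × V' → Bool}

lemma smap_eq_inl {w : V'} {z : V} : smap β α' w = Sum.inl z ↔ w = α' ∧ z = β := by
  unfold smap
  split_ifs with h <;> simp [h, eq_comm]

lemma emb_inj {a b : V × V} (h : (emb a : (V ⊕ V') × (V ⊕ V')) = emb b) : a = b := by
  simp only [emb, Prod.mk.injEq, Sum.inl.injEq] at h
  exact Prod.ext h.1 h.2

lemma mem_seriesArcs {b : (V ⊕ V') × (V ⊕ V')} :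
    b ∈ seriesArcs A A' β α' ↔ (∃ a ∈ A, b = emb a) ∨ (∃ a ∈ A', b = emb' β α' a) := by
  simp [seriesArcs, emb, emb', Finset.mem_union, Finset.mem_image, eq_comm, Prod.ext_iff]

lemma seriesLab_emb (a : V × V) :
    seriesLab α' lab lab' (emb (V' := V') a) = lab a := rfl

lemma seriesLab_emb' {a : V' × V'} (ha : a.1 ≠ a.2) :
    seriesLab α' lab lab' (emb' β α' a) = lab' a := by
  obtain ⟨x, y⟩ := a
  simp only [emb', smap]
  split_ifs with h1 h2 h2
  · exact absurd (h1.trans h2.symm) ha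
  · simp [seriesLab, h1]
  · simp [seriesLab, h2]
  · simp [seriesLab]

lemma src_emb (a : V × V) :
    src (seriesLab α' lab lab') (emb (V' := V') a) = Sum.inl (src lab a) := by
  simp only [src, seriesLab_emb]
  by_cases h : lab a = true <;> simp [emb, h]

lemma dst_emb (a : V × V) :
    dst (seriesLab α' lab lab') (emb (V' := V') a) = Sum.inl (dst lab a) := by
  simp only [dst, seriesLab_emb]
  by_cases h : lab a = true <;> simp [emb, h]

lemma src_emb' {a : V' × V'} (ha : a.1 ≠ a.2) :
    src (seriesLab α' lab lab') (emb' β α' a) = smap β α' (src lab' a) := by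
  simp only [src, seriesLab_emb' ha]
  by_cases h : lab' a = true <;> simp [emb', h]

lemma dst_emb' {a : V' × V'} (ha : a.1 ≠ a.2) :
    dst (seriesLab α' lab lab') (emb' β α' a) = smap β α' (dst lab' a) := by
  simp only [dst, seriesLab_emb' ha]
  by_cases h : lab' a = true <;> simp [emb', h]

end Series
section Walks

variable {W : Type*} {B : Finset (W × W)} {lb : W × W → Bool}

lemma revwalk_append {l₁ l₂ : List (W × W)} {x y z : W}
    (h₁ : IsRevWalk B lb l₁ x y) (h₂ : IsRevWalk B lb l₂ y z) :
    IsRevWalk B lb (l₁ ++ l₂) x z := by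
  obtain ⟨n₁, m₁, c₁, hd₁, lt₁⟩ := h₁
  obtain ⟨n₂, m₂, c₂, hd₂, lt₂⟩ := h₂
  refine ⟨by simp [n₁], ?_, ?_, ?_, ?_⟩
  · intro a ha
    rcases List.mem_append.1 ha with h | h
    exacts [m₁ a h, m₂ a h]
  · rw [List.Chain', List.isChain_append]
    refine ⟨c₁, c₂, fun a ha b hb => ?_⟩
    rw [Option.mem_def] at ha hb
    rw [ha] at lt₁
    rw [hb] at hd₂
    simp only [Option.map_some] at lt₁ hd₂
    rw [Option.some_inj] at lt₁ hd₂
    rw [lt₁, hd₂]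
  · rw [List.head?_append, List.head?_eq_head n₁]
    simpa [List.head?_eq_head n₁] using hd₁
  · rw [List.getLast?_append, List.getLast?_eq_getLast n₂]
    simpa [List.getLast?_eq_getLast n₂] using lt₂

lemma revwalk_split {l₁ l₂ : List (W × W)} {x z : W}
    (h : IsRevWalk B lb (l₁ ++ l₂) x z) (h₁ : l₁ ≠ []) (h₂ : l₂ ≠ []) :
    ∃ y, IsRevWalk B lb l₁ x y ∧ IsRevWalk B lb l₂ y z := by
  obtain ⟨-, m, c, hd, lt⟩ := h
  rw [List.Chain', List.isChain_append] at c
  obtain ⟨c₁, c₂, cmid⟩ := c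
  refine ⟨src lb (l₂.head h₂), ⟨h₁, fun a ha => m a (by simp [ha]), c₁, ?_, ?_⟩,
      ⟨h₂, fun a ha => m a (by simp [ha]), c₂, ?_, ?_⟩⟩
  · rw [List.head?_append, List.head?_eq_head h₁] at hd
    simpa [List.head?_eq_head h₁] using hd
  · have := cmid (l₁.getLast h₁) (by rw [Option.mem_def, List.getLast?_eq_getLast h₁])
      (l₂.head h₂) (by rw [Option.mem_def, List.head?_eq_head h₂])
    rw [List.getLast?_eq_getLast h₁, Option.map_some, this]
  · simp [List.head?_eq_head h₂]
  · rw [List.getLast?_append, List.getLast?_eq_getLast h₂] at lt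
    simpa [List.getLast?_eq_getLast h₂] using lt

lemma chain'_imp_mem {α : Type*} {R S : α → α → Prop} {l : List α}
    (h : l.Chain' R) (hm : ∀ a ∈ l, ∀ b ∈ l, R a b → S a b) : l.Chain' S := by
  induction l with
  | nil => exact List.IsChain.nil
  | cons a t ih =>
    cases t with
    | nil => exact List.IsChain.singleton _
    | cons b t' =>
      simp only [List.Chain', List.isChain_cons_cons] at h ⊢
      refine ⟨hm a (by simp) b (by simp) h.1, ih h.2 ?_⟩
      intro u hu v hv huv
      exact hm u (by simp [hu]) v (by simp [hv]) huv

lemma exists_preimage_list {γ δ : Type*} (f : γ → δ) (P : γ → Prop) {l : List δ}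
    (hall : ∀ b ∈ l, ∃ a, P a ∧ b = f a) : ∃ l₀ : List γ, l = l₀.map f ∧ ∀ a ∈ l₀, P a := by
  induction l with
  | nil => exact ⟨[], rfl, by simp⟩
  | cons b t ih =>
    obtain ⟨a, ha, rfl⟩ := hall b (by simp)
    obtain ⟨l₀, heq, h₀⟩ := ih (fun c hc => hall c (by simp [hc]))
    refine ⟨a :: l₀, by rw [List.map_cons, ← heq], ?_⟩
    intro x hx
    rcases List.mem_cons.1 hx with rfl | hx
    exacts [ha, h₀ x hx]

end Walks
section Series2

set_option linter.unusedSectionVars false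

variable {V V' : Type*} [DecidableEq V] [DecidableEq V']
  {A : Finset (V × V)} {A' : Finset (V' × V')} {β : V} {α' : V'}
  {lab : V × V → Bool} {lab' : V' × V' → Bool}

lemma smap_self : smap β α' α' = Sum.inl β := by simp [smap]

lemma smap_eq_inr {w u : V'} : smap β α' w = Sum.inr u ↔ w = u ∧ w ≠ α' := by
  unfold smap
  split_ifs with h
  · simp [h, Ne, eq_comm]
  · simp [h]

lemma smap_injective : Function.Injective (smap β α' : V' → V ⊕ V') := by
  intro a b h
  unfold smap at h
  split_ifs at h with h1 h2 h2 <;> simp_all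

lemma negative_map_emb {l₀ : List (V × V)} :
    Negative (seriesLab α' lab lab') (l₀.map emb) ↔ Negative lab l₀ := by
  simp only [Negative, List.mem_map]
  constructor
  · rintro ⟨b, ⟨a, ha, rfl⟩, hfalse⟩
    exact ⟨a, ha, by rwa [seriesLab_emb] at hfalse⟩
  · rintro ⟨a, ha, hfalse⟩
    exact ⟨emb a, ⟨a, ha, rfl⟩, by rwa [seriesLab_emb]⟩

lemma negative_map_emb' {l₀ : List (V' × V')} (hm : ∀ a ∈ l₀, a.1 ≠ a.2) :
    Negative (seriesLab α' lab lab') (l₀.map (emb' β α')) ↔ Negative lab' l₀ := by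
  simp only [Negative, List.mem_map]
  constructor
  · rintro ⟨b, ⟨a, ha, rfl⟩, hfalse⟩
    exact ⟨a, ha, by rwa [seriesLab_emb' (hm a ha)] at hfalse⟩
  · rintro ⟨a, ha, hfalse⟩
    exact ⟨emb' β α' a, ⟨a, ha, rfl⟩, by rwa [seriesLab_emb' (hm a ha)]⟩

lemma revwalk_map_emb {l : List (V × V)} {x y : V} (h : IsRevWalk A lab l x y) :
    IsRevWalk (seriesArcs A A' β α') (seriesLab α' lab lab') (l.map emb)
      (Sum.inl x) (Sum.inl y) := by
  obtain ⟨n, m, c, hd, lt⟩ := h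
  refine ⟨by simpa using n, ?_, ?_, ?_, ?_⟩
  · simp only [List.mem_map]
    rintro b ⟨a, ha, rfl⟩
    exact mem_seriesArcs.2 (Or.inl ⟨a, m a ha, rfl⟩)
  · rw [List.Chain', List.isChain_map]
    exact c.imp (fun {a b} hab => by rw [dst_emb, src_emb, hab])
  · rw [List.head?_map, List.head?_eq_head n] at *
    simp only [Option.map_some, Option.some_inj] at hd ⊢
    rw [src_emb, hd]
  · rw [List.getLast?_map, List.getLast?_eq_getLast n] at *
    simp only [Option.map_some, Option.some_inj] at lt ⊢
    rw [dst_emb, lt]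

lemma revwalk_map_emb' (hloop' : ∀ a ∈ A', a.1 ≠ a.2) {l : List (V' × V')} {x y : V'}
    (h : IsRevWalk A' lab' l x y) :
    IsRevWalk (seriesArcs A A' β α') (seriesLab α' lab lab') (l.map (emb' β α'))
      (smap β α' x) (smap β α' y) := by
  obtain ⟨n, m, c, hd, lt⟩ := h
  refine ⟨by simpa using n, ?_, ?_, ?_, ?_⟩
  · simp only [List.mem_map]
    rintro b ⟨a, ha, rfl⟩
    exact mem_seriesArcs.2 (Or.inr ⟨a, m a ha, rfl⟩)
  · rw [List.Chain', List.isChain_map]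
    refine chain'_imp_mem c ?_
    intro a ha b hb hab
    rw [dst_emb' (hloop' a (m a ha)), src_emb' (hloop' b (m b hb)), hab]
  · rw [List.head?_map, List.head?_eq_head n] at *
    simp only [Option.map_some, Option.some_inj] at hd ⊢
    rw [src_emb' (hloop' _ (m _ (List.head_mem n))), hd]
  · rw [List.getLast?_map, List.getLast?_eq_getLast n] at *
    simp only [Option.map_some, Option.some_inj] at lt ⊢
    rw [dst_emb' (hloop' _ (m _ (List.getLast_mem n))), lt]

lemma revwalk_of_map_emb {l₀ : List (V × V)} {x y : V ⊕ V'}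
    (h : IsRevWalk (seriesArcs A A' β α') (seriesLab α' lab lab') (l₀.map emb) x y)
    (hm : ∀ a ∈ l₀, a ∈ A) :
    ∃ x₀ y₀, x = Sum.inl x₀ ∧ y = Sum.inl y₀ ∧ IsRevWalk A lab l₀ x₀ y₀ := by
  obtain ⟨n, -, c, hd, lt⟩ := h
  have n₀ : l₀ ≠ [] := by simpa using n
  refine ⟨src lab (l₀.head n₀), dst lab (l₀.getLast n₀), ?_, ?_, n₀, hm, ?_, ?_, ?_⟩
  · rw [List.head?_map, List.head?_eq_head n₀] at hd
    simp only [Option.map_some, Option.some_inj] at hd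
    rw [← hd, src_emb]
  · rw [List.getLast?_map, List.getLast?_eq_getLast n₀] at lt
    simp only [Option.map_some, Option.some_inj] at lt
    rw [← lt, dst_emb]
  · rw [List.Chain', List.isChain_map] at c
    exact c.imp (fun {a b} hab => by rwa [dst_emb, src_emb, Sum.inl.injEq] at hab)
  · simp [List.head?_eq_head n₀]
  · simp [List.getLast?_eq_getLast n₀]

lemma revwalk_of_map_emb' (hloop' : ∀ a ∈ A', a.1 ≠ a.2) {l₀ : List (V' × V')} {x y : V ⊕ V'}
    (h : IsRevWalk (seriesArcs A A' β α') (seriesLab α' lab lab') (l₀.map (emb' β α')) x y)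
    (hm : ∀ a ∈ l₀, a ∈ A') :
    ∃ x₀ y₀, x = smap β α' x₀ ∧ y = smap β α' y₀ ∧ IsRevWalk A' lab' l₀ x₀ y₀ := by
  obtain ⟨n, -, c, hd, lt⟩ := h
  have n₀ : l₀ ≠ [] := by simpa using n
  refine ⟨src lab' (l₀.head n₀), dst lab' (l₀.getLast n₀), ?_, ?_, n₀, hm, ?_, ?_, ?_⟩
  · rw [List.head?_map, List.head?_eq_head n₀] at hd
    simp only [Option.map_some, Option.some_inj] at hd
    rw [← hd, src_emb' (hloop' _ (hm _ (List.head_mem n₀)))]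
  · rw [List.getLast?_map, List.getLast?_eq_getLast n₀] at lt
    simp only [Option.map_some, Option.some_inj] at lt
    rw [← lt, dst_emb' (hloop' _ (hm _ (List.getLast_mem n₀)))]
  · rw [List.Chain', List.isChain_map] at c
    refine chain'_imp_mem c ?_
    intro a ha b hb hab
    rw [dst_emb' (hloop' a (hm a ha)), src_emb' (hloop' b (hm b hb))] at hab
    exact smap_injective hab
  · simp [List.head?_eq_head n₀]
  · simp [List.getLast?_eq_getLast n₀]

/-- Type of an arc of the series composition: `true` for arcs coming from `G`. -/
def typA : (V ⊕ V') × (V ⊕ V') → Bool := fun b => b.1.isLeft && b.2.isLeft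

lemma typ_emb (a : V × V) : typA (emb (V' := V') a) = true := rfl

lemma typ_emb' {a : V' × V'} (ha : a.1 ≠ a.2) : typA (emb' β α' a) = false := by
  obtain ⟨x, y⟩ := a
  simp only [emb', smap, typA]
  split_ifs with h1 h2 h2 <;> simp_all

lemma arc_cases (hloop' : ∀ a ∈ A', a.1 ≠ a.2) {b : (V ⊕ V') × (V ⊕ V')}
    (hb : b ∈ seriesArcs A A' β α') :
    (typA b = true ∧ ∃ a ∈ A, b = emb a) ∨
      (typA b = false ∧ ∃ a ∈ A', b = emb' β α' a) := by
  rcases mem_seriesArcs.1 hb with ⟨a, ha, rfl⟩ | ⟨a, ha, rfl⟩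
  · exact Or.inl ⟨typ_emb a, a, ha, rfl⟩
  · exact Or.inr ⟨typ_emb' (hloop' a ha), a, ha, rfl⟩

lemma junction (hloop' : ∀ a ∈ A', a.1 ≠ a.2) {a b : (V ⊕ V') × (V ⊕ V')}
    (ha : a ∈ seriesArcs A A' β α') (hb : b ∈ seriesArcs A A' β α')
    (hne : typA a ≠ typA b)
    (hj : dst (seriesLab α' lab lab') a = src (seriesLab α' lab lab') b) :
    dst (seriesLab α' lab lab') a = Sum.inl β := by
  rcases arc_cases hloop' ha with ⟨ta, a₀, ha₀, rfl⟩ | ⟨ta, a₀, ha₀, rfl⟩ <;>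
    rcases arc_cases hloop' hb with ⟨tb, b₀, hb₀, rfl⟩ | ⟨tb, b₀, hb₀, rfl⟩
  · exact absurd (ta.trans tb.symm) hne
  · rw [dst_emb] at hj ⊢
    rw [src_emb' (hloop' b₀ hb₀)] at hj
    obtain ⟨-, rfl⟩ := smap_eq_inl.1 hj.symm
    rfl
  · rw [dst_emb' (hloop' a₀ ha₀)] at hj ⊢
    rw [src_emb] at hj
    obtain ⟨rfl, -⟩ := smap_eq_inl.1 hj
    rw [smap_self]
  · exact absurd (ta.trans tb.symm) hne

end Series2
section Main

set_option linter.unusedSectionVars false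

variable {V V' : Type*} [DecidableEq V] [DecidableEq V']
  {A : Finset (V × V)} {A' : Finset (V' × V')} {β : V} {α' : V'}
  {lab : V × V → Bool} {lab' : V' × V' → Bool}

lemma takeWhile_ne_nil_of_head {γ : Type*} {p : γ → Bool} {l : List γ} (hne : l ≠ [])
    (h : p (l.head hne) = true) : l.takeWhile p ≠ [] := by
  cases l with
  | nil => exact absurd rfl hne
  | cons a t =>
    simp only [List.head_cons] at h
    simp [List.takeWhile_cons, h]

lemma closed_pure_not_neg (hloop' : ∀ a ∈ A', a.1 ≠ a.2)
    (hv : Valid A lab) (hv' : Valid A' lab')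
    {l : List ((V ⊕ V') × (V ⊕ V'))} {x : V ⊕ V'}
    (h : IsRevWalk (seriesArcs A A' β α') (seriesLab α' lab lab') l x x)
    (hpure : (∀ b ∈ l, typA b = true) ∨ (∀ b ∈ l, typA b = false)) :
    ¬ Negative (seriesLab α' lab lab') l := by
  rcases hpure with hp | hp
  · have hall : ∀ b ∈ l, ∃ a, a ∈ A ∧ b = emb a := by
      intro b hb
      rcases arc_cases hloop' (h.2.1 b hb) with ⟨-, a, ha, rfl⟩ | ⟨t, -⟩
      · exact ⟨a, ha, rfl⟩
      · rw [hp b hb] at t; cases t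
    obtain ⟨l₀, hEq, hm⟩ := exists_preimage_list emb (· ∈ A) hall
    rw [hEq] at h ⊢
    obtain ⟨x₀, y₀, hx, hy, hw⟩ := revwalk_of_map_emb h hm
    rw [negative_map_emb]
    have hxy : x₀ = y₀ := by rw [hx] at hy; exact Sum.inl_injective hy
    exact hv l₀ ⟨x₀, by rwa [← hxy] at hw⟩
  · have hall : ∀ b ∈ l, ∃ a, a ∈ A' ∧ b = emb' β α' a := by
      intro b hb
      rcases arc_cases hloop' (h.2.1 b hb) with ⟨t, -⟩ | ⟨-, a, ha, rfl⟩
      · rw [hp b hb] at t; cases t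
      · exact ⟨a, ha, rfl⟩
    obtain ⟨l₀, hEq, hm⟩ := exists_preimage_list (emb' β α') (· ∈ A') hall
    rw [hEq] at h ⊢
    obtain ⟨x₀, y₀, hx, hy, hw⟩ := revwalk_of_map_emb' hloop' h hm
    rw [negative_map_emb' (fun a ha => hloop' a (hm a ha))]
    have hxy : x₀ = y₀ := by rw [hx] at hy; exact smap_injective hy
    exact hv' l₀ ⟨x₀, by rwa [← hxy] at hw⟩

lemma peel (hloop' : ∀ a ∈ A', a.1 ≠ a.2)
    {l : List ((V ⊕ V') × (V ⊕ V'))} {x z : V ⊕ V'} {t : Bool}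
    (hw : IsRevWalk (seriesArcs A A' β α') (seriesLab α' lab lab') l x z)
    (h₁ : l.takeWhile (fun b => typA b == t) ≠ [])
    (h₂ : l.dropWhile (fun b => typA b == t) ≠ []) :
    IsRevWalk (seriesArcs A A' β α') (seriesLab α' lab lab')
        (l.takeWhile (fun b => typA b == t)) x (Sum.inl β) ∧
      IsRevWalk (seriesArcs A A' β α') (seriesLab α' lab lab')
        (l.dropWhile (fun b => typA b == t)) (Sum.inl β) z ∧
      ∀ b ∈ l.takeWhile (fun b => typA b == t), typA b = t := by
  set p : (V ⊕ V') × (V ⊕ V') → Bool := fun b => typA b == t with hpdef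
  have hw' : IsRevWalk (seriesArcs A A' β α') (seriesLab α' lab lab')
      (l.takeWhile p ++ l.dropWhile p) x z := by
    rwa [List.takeWhile_append_dropWhile]
  obtain ⟨y, w₁, w₂⟩ := revwalk_split hw' h₁ h₂
  have hmem : ∀ a ∈ l, a ∈ seriesArcs A A' β α' := hw.2.1
  have hd_last : dst (seriesLab α' lab lab') ((l.takeWhile p).getLast h₁) = y := by
    have hc := w₁.2.2.2.2
    rw [List.getLast?_eq_getLast h₁] at hc
    simpa using hc
  have hs_head : src (seriesLab α' lab lab') ((l.dropWhile p).head h₂) = y := by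
    have hc := w₂.2.2.2.1
    rw [List.head?_eq_head h₂] at hc
    simpa using hc
  have ht1 : typA ((l.takeWhile p).getLast h₁) = t := by
    have := List.mem_takeWhile_imp (List.getLast_mem h₁)
    simpa [hpdef] using this
  have ht2 : typA ((l.dropWhile p).head h₂) ≠ t := by
    have := List.head_dropWhile_not p h₂
    simpa [hpdef] using this
  have hy : y = Sum.inl β := by
    rw [← hd_last]
    refine junction hloop' (hmem _ (List.takeWhile_subset p (List.getLast_mem h₁)))
      (hmem _ (List.dropWhile_subset p (List.head_mem h₂))) ?_ ?_
    · rw [ht1]; exact fun h => ht2 h.symm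
    · rw [hd_last, hs_head]
  refine ⟨hy ▸ w₁, hy ▸ w₂, fun b hb => ?_⟩
  have := List.mem_takeWhile_imp hb
  simpa [hpdef] using this

lemma series_valid (hloop' : ∀ a ∈ A', a.1 ≠ a.2)
    (hv : Valid A lab) (hv' : Valid A' lab') :
    Valid (seriesArcs A A' β α') (seriesLab α' lab lab') := by
  suffices H : ∀ n (l : List ((V ⊕ V') × (V ⊕ V'))), l.length ≤ n →
      (∃ x, IsRevWalk (seriesArcs A A' β α') (seriesLab α' lab lab') l x x) →
      ¬ Negative (seriesLab α' lab lab') l by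
    exact fun l hl => H l.length l le_rfl hl
  intro n
  induction n with
  | zero =>
    rintro l hlen ⟨x, hw⟩ hneg
    have hne := hw.1
    cases l with
    | nil => exact hne rfl
    | cons a t => simp at hlen
  | succ n ih =>
    rintro l hlen ⟨x, hw⟩ hneg
    rcases Classical.em ((∀ b ∈ l, typA b = true) ∨ (∀ b ∈ l, typA b = false)) with
      hpure | hpure
    · exact closed_pure_not_neg hloop' hv hv' hw hpure hneg
    · push_neg at hpure
      obtain ⟨⟨b₁, hb₁, ht₁⟩, b₂, hb₂, ht₂⟩ := hpure
      replace ht₁ : typA b₁ = false := by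
        cases h : typA b₁
        · rfl
        · exact absurd h ht₁
      replace ht₂ : typA b₂ = true := by
        cases h : typA b₂
        · exact absurd h ht₂
        · rfl
      have hne : l ≠ [] := hw.1
      set t0 := typA (l.head hne) with ht0def
      set p : (V ⊕ V') × (V ⊕ V') → Bool := fun b => typA b == t0 with hpdef
      have htw : l.takeWhile p ≠ [] :=
        takeWhile_ne_nil_of_head hne (by simp [hpdef, ht0def])
      have hdw : l.dropWhile p ≠ [] := by
        intro hnil
        have hall := List.dropWhile_eq_nil_iff.1 hnil
        have e₁ := hall b₁ hb₁
        have e₂ := hall b₂ hb₂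
        simp only [hpdef, beq_iff_eq] at e₁ e₂
        rw [ht₁] at e₁
        rw [ht₂] at e₂
        rw [← e₁] at e₂
        cases e₂
      obtain ⟨w₁, w₂, hpure₁⟩ := peel hloop' hw htw hdw
      have hrot : IsRevWalk (seriesArcs A A' β α') (seriesLab α' lab lab')
          (l.dropWhile p ++ l.takeWhile p) (Sum.inl β) (Sum.inl β) :=
        revwalk_append w₂ w₁
      set L := l.dropWhile p ++ l.takeWhile p with hLdef
      have hLne : L ≠ [] := by
        simp only [hLdef]
        intro hL
        exact hdw (List.append_eq_nil_iff.1 hL).1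
      have hheadL : L.head hLne = (l.dropWhile p).head hdw :=
        List.head_append_of_ne_nil hdw
      set t1 := typA (L.head hLne) with ht1def
      have ht1ne : t1 ≠ t0 := by
        rw [ht1def, hheadL]
        have := List.head_dropWhile_not p hdw
        simpa [hpdef] using this
      set q : (V ⊕ V') × (V ⊕ V') → Bool := fun b => typA b == t1 with hqdef
      have hqtw : L.takeWhile q ≠ [] :=
        takeWhile_ne_nil_of_head hLne (by simp [hqdef, ht1def])
      have hqdw : L.dropWhile q ≠ [] := by
        intro hnil
        have hall := List.dropWhile_eq_nil_iff.1 hnil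
        have hmemL : (l.takeWhile p).head htw ∈ L := by
          rw [hLdef]
          exact List.mem_append_right _ (List.head_mem htw)
        have e := hall _ hmemL
        simp only [hqdef, beq_iff_eq] at e
        have := hpure₁ _ (List.head_mem htw)
        rw [this] at e
        exact ht1ne e.symm
      obtain ⟨u₁, u₂, hpure₂⟩ := peel hloop' hrot hqtw hqdw
      have hnneg₁ : ¬ Negative (seriesLab α' lab lab') (L.takeWhile q) := by
        refine closed_pure_not_neg hloop' hv hv' u₁ ?_
        cases ht : t1 with
        | false => exact Or.inr (fun b hb => by rw [hpure₂ b hb, ht])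
        | true => exact Or.inl (fun b hb => by rw [hpure₂ b hb, ht])
      have hnneg₂ : ¬ Negative (seriesLab α' lab lab') (L.dropWhile q) := by
        refine ih _ ?_ ⟨Sum.inl β, u₂⟩
        have hlenL : L.length = l.length := by
          have h0 := congrArg List.length (List.takeWhile_append_dropWhile (p := p) (l := l))
          simp only [List.length_append] at h0
          simp only [hLdef, List.length_append]
          omega
        have h1 : (L.takeWhile q).length + (L.dropWhile q).length = L.length := by
          rw [← List.length_append, List.takeWhile_append_dropWhile]
        have h2 : 1 ≤ (L.takeWhile q).length := by
          rcases List.exists_cons_of_ne_nil hqtw with ⟨a, s, hs⟩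
          simp [hs]
        omega
      obtain ⟨a, haL, hfa⟩ := hneg
      have haL' : a ∈ L.takeWhile q ++ L.dropWhile q := by
        rw [List.takeWhile_append_dropWhile]
        rw [hLdef]
        rcases List.mem_append.1 (by rwa [← List.takeWhile_append_dropWhile (p := p) (l := l)] at haL :
            a ∈ l.takeWhile p ++ l.dropWhile p) with h | h
        · exact List.mem_append_right _ h
        · exact List.mem_append_left _ h
      rcases List.mem_append.1 haL' with h | h
      · exact hnneg₁ ⟨a, h, hfa⟩
      · exact hnneg₂ ⟨a, h, hfa⟩

end Main
/-- For the series composition `D` of `(G, α, β)` and `(G', α', β')`, the union of a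
labeling in `UD_{α,β}^{+,∅}(G)` and a labeling in `UD_{α',β'}^{-,∅}(G')` is a valid
labeling of `D` lying in `UD_{α,β'}^{-,∅}(D)`. -/
theorem statement16 {V V' : Type*} [DecidableEq V] [DecidableEq V']
    (A : Finset (V × V)) (A' : Finset (V' × V')) (α β : V) (α' β' : V')
    (hαβ : α ≠ β) (hαβ' : α' ≠ β')
    (hloop : ∀ a ∈ A, a.1 ≠ a.2) (hloop' : ∀ a ∈ A', a.1 ≠ a.2)
    (lab : V × V → Bool) (lab' : V' × V' → Bool)
    (hv : Valid A lab) (hv' : Valid A' lab')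
    (h1 : HasClass A lab α β PClass.pos) (h2 : HasClass A lab β α PClass.none)
    (h1' : HasClass A' lab' α' β' PClass.neg) (h2' : HasClass A' lab' β' α' PClass.none) :
    Valid (seriesArcs A A' β α') (seriesLab α' lab lab') ∧
    HasClass (seriesArcs A A' β α') (seriesLab α' lab lab')
      (Sum.inl α) (Sum.inr β') PClass.neg ∧
    HasClass (seriesArcs A A' β α') (seriesLab α' lab lab')
      (Sum.inr β') (Sum.inl α) PClass.none := by
  refine ⟨series_valid hloop' hv hv', ?_, ?_⟩
  · -- negative class from `inl α` to `inr β'`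
    obtain ⟨⟨l₁, hl₁⟩, -⟩ := h1
    obtain ⟨l₂, hl₂, hneg₂⟩ := h1'
    refine ⟨l₁.map emb ++ l₂.map (emb' β α'), ?_, ?_⟩
    · have w₁ : IsRevWalk (seriesArcs A A' β α') (seriesLab α' lab lab') (l₁.map emb)
          (Sum.inl α) (Sum.inl β) := revwalk_map_emb hl₁
      have w₂ : IsRevWalk (seriesArcs A A' β α') (seriesLab α' lab lab')
          (l₂.map (emb' β α')) (smap β α' α') (smap β α' β') :=
        revwalk_map_emb' hloop' hl₂
      rw [smap_self] at w₂
      have hβ' : smap β α' β' = Sum.inr β' := smap_eq_inr.2 ⟨rfl, fun h => hαβ' h.symm⟩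
      rw [hβ'] at w₂
      exact revwalk_append w₁ w₂
    · obtain ⟨a, ha, hfa⟩ := hneg₂
      refine ⟨emb' β α' a, List.mem_append_right _ (List.mem_map_of_mem ha), ?_⟩
      rw [seriesLab_emb' (hloop' a (hl₂.2.1 a ha))]
      exact hfa
  · -- empty class from `inr β'` to `inl α`
    rintro ⟨l, hw⟩
    have hne : l ≠ [] := hw.1
    have hmem : ∀ a ∈ l, a ∈ seriesArcs A A' β α' := hw.2.1
    have hhead_src : src (seriesLab α' lab lab') (l.head hne) = Sum.inr β' := by
      have hc := hw.2.2.2.1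
      rw [List.head?_eq_head hne] at hc
      simpa using hc
    have hlast_dst : dst (seriesLab α' lab lab') (l.getLast hne) = Sum.inl α := by
      have hc := hw.2.2.2.2
      rw [List.getLast?_eq_getLast hne] at hc
      simpa using hc
    have htw : l.takeWhile (fun b => typA b == false) ≠ [] := by
      refine takeWhile_ne_nil_of_head hne ?_
      rcases arc_cases hloop' (hmem _ (List.head_mem hne)) with ⟨-, a, ha, hEq⟩ |
          ⟨ht, -⟩
      · rw [hEq, src_emb] at hhead_src
        cases hhead_src
      · simp [ht]
    have hdw : l.dropWhile (fun b => typA b == false) ≠ [] := by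
      intro hnil
      have hall := List.dropWhile_eq_nil_iff.1 hnil
      have hlastf := hall _ (List.getLast_mem hne)
      simp only [beq_iff_eq] at hlastf
      rcases arc_cases hloop' (hmem _ (List.getLast_mem hne)) with ⟨ht, -⟩ |
          ⟨-, a, ha, hEq⟩
      · rw [hlastf] at ht
        cases ht
      · rw [hEq, dst_emb' (hloop' a ha)] at hlast_dst
        obtain ⟨-, hβα⟩ := smap_eq_inl.1 hlast_dst
        exact hαβ hβα
    obtain ⟨w₁, -, hpure₁⟩ := peel hloop' hw htw hdw
    have hall : ∀ b ∈ l.takeWhile (fun b => typA b == false),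
        ∃ a, a ∈ A' ∧ b = emb' β α' a := by
      intro b hb
      rcases arc_cases hloop' (hmem b (List.takeWhile_subset _ hb)) with ⟨ht, -⟩ |
          ⟨-, a, ha, rfl⟩
      · rw [hpure₁ b hb] at ht
        cases ht
      · exact ⟨a, ha, rfl⟩
    obtain ⟨l₀, hEq, hm⟩ := exists_preimage_list (emb' β α') (· ∈ A') hall
    rw [hEq] at w₁
    obtain ⟨x₀, y₀, hx, hy, hw₀⟩ := revwalk_of_map_emb' hloop' w₁ hm
    obtain ⟨hx₀, -⟩ := smap_eq_inr.1 hx.symm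
    obtain ⟨hy₀, -⟩ := smap_eq_inl.1 hy.symm
    exact h2' ⟨l₀, by rwa [hx₀, hy₀] at hw₀⟩

end UD
end
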